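/- arXiv:2510.17216 — 2 statements merged into one kernel-verified Lean document; each statement's English description precedes it below -/
import Mathlib

section
/- Let (A ♯_σ^× H, β ⊗ α) be a Radford [(m,k),m]-biproduct monoidal Hom-bialgebra with σ convolution invertible. Define φ^l: H ⊗ (A ⊗ H) → A ⊗ H by φ^l(l ⊗ (a ⊗ h)) = (α(l₁₁)·β⁻¹(a)) σ(α^{k+2−m}(l₁₂), α^{k+1}(h₁)) ⊗ α^{1−m}(l₂)α(h₂), and σ̄: H ⊗ H → A ⊗ H by σ̄(h ⊗ l) = σ(α^{k+1−m}(h), α^{k+1−m}(l)) ⊗ 1_H. Then (A ♯_σ^× H, β ⊗ α, φ^l) is a left (H, α, σ̄)-Hom module: φ^l(α(g) ⊗ φ^l(l ⊗ x)) = (β ⊗ α)(σ̄(g₁, l₁)) · φ^l(g₂l₂ ⊗ x) and φ^l(1_H ⊗ x) = (β ⊗ α)(x) for all g, l ∈ H and x ∈ A ⊗ H. -/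
open TensorProduct

noncomputable section

/-- A monoidal Hom-algebra `(A, β)`. -/
structure HomAlgebraStr (K : Type*) (A : Type*) [Field K] [AddCommGroup A] [Module K A] where
  mul : A →ₗ[K] A →ₗ[K] A
  one : A
  str : A ≃ₗ[K] A
  hom_assoc : ∀ a b c : A, mul (str a) (mul b c) = mul (mul a b) (str c)
  str_mul : ∀ a b : A, str (mul a b) = mul (str a) (str b)
  mul_one : ∀ a : A, mul a one = str a
  one_mul : ∀ a : A, mul one a = str a
  str_one : str one = one

/-- A monoidal Hom-coalgebra `(C, γ)`. -/
structure HomCoalgebraStr (K : Type*) (C : Type*) [Field K] [AddCommGroup C] [Module K C] where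
  comul : C →ₗ[K] C ⊗[K] C
  counit : C →ₗ[K] K
  str : C ≃ₗ[K] C
  hom_coassoc : ∀ c : C,
    TensorProduct.map str.symm.toLinearMap comul (comul c)
      = TensorProduct.assoc K C C C (TensorProduct.map comul str.symm.toLinearMap (comul c))
  comul_str : ∀ c : C, comul (str c) = TensorProduct.map str.toLinearMap str.toLinearMap (comul c)
  counit_comul_left : ∀ c : C,
    TensorProduct.lid K C (TensorProduct.map counit (LinearMap.id : C →ₗ[K] C) (comul c)) = str.symm c
  counit_comul_right : ∀ c : C,
    TensorProduct.rid K C (TensorProduct.map (LinearMap.id : C →ₗ[K] C) counit (comul c)) = str.symm c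
  counit_str : ∀ c : C, counit (str c) = counit c

/-- The componentwise multiplication on `N ⊗ N` induced by a bilinear multiplication on `N`. -/
def tensorSquareMul {K N : Type*} [Field K] [AddCommGroup N] [Module K N]
    (mul : N →ₗ[K] N →ₗ[K] N) :
    (N ⊗[K] N) →ₗ[K] (N ⊗[K] N) →ₗ[K] (N ⊗[K] N) :=
  TensorProduct.curry
    ((TensorProduct.map (TensorProduct.lift mul) (TensorProduct.lift mul)) ∘ₗ
      (TensorProduct.tensorTensorTensorComm K N N N N).toLinearMap)

/-- A monoidal Hom-bialgebra `(H, α)`. -/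
structure HomBialgebraStr (K : Type*) (H : Type*) [Field K] [AddCommGroup H] [Module K H]
    extends HomAlgebraStr K H where
  comul : H →ₗ[K] H ⊗[K] H
  counit : H →ₗ[K] K
  hom_coassoc : ∀ c : H,
    TensorProduct.map str.symm.toLinearMap comul (comul c)
      = TensorProduct.assoc K H H H (TensorProduct.map comul str.symm.toLinearMap (comul c))
  comul_str : ∀ c : H, comul (str c) = TensorProduct.map str.toLinearMap str.toLinearMap (comul c)
  counit_comul_left : ∀ c : H,
    TensorProduct.lid K H (TensorProduct.map counit (LinearMap.id : H →ₗ[K] H) (comul c)) = str.symm c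
  counit_comul_right : ∀ c : H,
    TensorProduct.rid K H (TensorProduct.map (LinearMap.id : H →ₗ[K] H) counit (comul c)) = str.symm c
  counit_str : ∀ c : H, counit (str c) = counit c
  comul_mul : ∀ a b : H, comul (mul a b) = tensorSquareMul mul (comul a) (comul b)
  comul_one : comul one = one ⊗ₜ[K] one
  counit_mul : ∀ a b : H, counit (mul a b) = counit a * counit b
  counit_one : counit one = 1

/-- A monoidal Hom-Hopf algebra `(H, α, S)`. -/
structure HomHopfStr (K : Type*) (H : Type*) [Field K] [AddCommGroup H] [Module K H]
    extends HomBialgebraStr K H where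
  antipode : H →ₗ[K] H
  antipode_str : ∀ h : H, antipode (str h) = str (antipode h)
  antipode_mul_left : ∀ h : H,
    TensorProduct.lift (mul ∘ₗ antipode) (comul h) = counit h • one
  antipode_mul_right : ∀ h : H,
    TensorProduct.lift (mul.compl₂ antipode) (comul h) = counit h • one

section Defs

variable {K H A C M : Type*} [Field K]
variable [AddCommGroup H] [Module K H] [AddCommGroup A] [Module K A]
variable [AddCommGroup C] [Module K C] [AddCommGroup M] [Module K M]

/-- `(A, β)` is a left weak `(H, α)`-Hom-module algebra via `act`:
`h·(ab) = (h₁·a)(h₂·b)` and `h·1 = ε(h)1`. -/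
structure IsWeakModuleAlgebra (HB : HomBialgebraStr K H) (AA : HomAlgebraStr K A)
    (act : H →ₗ[K] A →ₗ[K] A) : Prop where
  act_mul : ∀ (h : H) (a b : A),
    act h (AA.mul a b)
      = TensorProduct.lift AA.mul
          (TensorProduct.map (TensorProduct.lift act) (TensorProduct.lift act)
            (TensorProduct.map ((TensorProduct.mk K H A).flip a) ((TensorProduct.mk K H A).flip b)
              (HB.comul h)))
  act_one : ∀ h : H, act h AA.one = HB.counit h • AA.one

/-- `(C, β)` is a left `(H, α)`-Hom-comodule coalgebra via `coact a = a₍₋₁₎ ⊗ a₍₀₎`. -/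
structure IsComoduleCoalgebra (HB : HomBialgebraStr K H) (CC : HomCoalgebraStr K C)
    (coact : C →ₗ[K] H ⊗[K] C) : Prop where
  comodule_coassoc : ∀ c : C,
    TensorProduct.assoc K H H C
        (TensorProduct.map HB.comul CC.str.symm.toLinearMap (coact c))
      = TensorProduct.map HB.str.symm.toLinearMap coact (coact c)
  coact_str : ∀ c : C,
    coact (CC.str c) = TensorProduct.map HB.str.toLinearMap CC.str.toLinearMap (coact c)
  counit_coact : ∀ c : C,
    TensorProduct.lid K C (TensorProduct.map HB.counit (LinearMap.id : C →ₗ[K] C) (coact c))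
      = CC.str.symm c
  coact_comul : ∀ c : C,
    TensorProduct.map (LinearMap.id : H →ₗ[K] H) CC.comul (coact c)
      = TensorProduct.map (TensorProduct.lift HB.mul) (LinearMap.id : C ⊗[K] C →ₗ[K] C ⊗[K] C)
          (TensorProduct.tensorTensorTensorComm K H C H C
            (TensorProduct.map coact coact (CC.comul c)))
  counit_coact_one : ∀ c : C,
    TensorProduct.rid K H (TensorProduct.map (LinearMap.id : H →ₗ[K] H) CC.counit (coact c))
      = CC.counit c • HB.one

/-- The `(m,k)`-Hom-crossed product multiplication on simple tensors:
`(a ♯ h)(b ♯ g) = a[(α^m(h₁₁)·β⁻²(b)) σ(α^{k+1}(h₁₂), α^k(g₁))] ♯ α(h₂g₂)`. -/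
def cpMulElem (HB : HomBialgebraStr K H) (AA : HomAlgebraStr K A)
    (act : H →ₗ[K] A →ₗ[K] A) (σ : H →ₗ[K] H →ₗ[K] A) (m k : ℤ)
    (a : A) (h : H) (b : A) (g : H) : A ⊗[K] H :=
  TensorProduct.map
    ((AA.mul a) ∘ₗ TensorProduct.lift AA.mul ∘ₗ
      TensorProduct.map
        ((act.flip ((AA.str ^ (-2 : ℤ)) b)) ∘ₗ (HB.str ^ m).toLinearMap)
        (TensorProduct.lift σ ∘ₗ
          TensorProduct.map (HB.str ^ (k+1)).toLinearMap (HB.str ^ k).toLinearMap) ∘ₗ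
      (TensorProduct.assoc K H H H).toLinearMap)
    (HB.str.toLinearMap ∘ₗ TensorProduct.lift HB.mul)
    (TensorProduct.map (TensorProduct.map HB.comul (LinearMap.id : H →ₗ[K] H))
      (LinearMap.id : H ⊗[K] H →ₗ[K] H ⊗[K] H)
      (TensorProduct.tensorTensorTensorComm K H H H H (HB.comul h ⊗ₜ[K] HB.comul g)))

/-- The `m`-Hom-smash product multiplication on simple tensors:
`(a ♯ h)(b ♯ g) = a(α^m(h₁)·β⁻¹(b)) ♯ α(h₂)g`. -/
def smashMulElem (HB : HomBialgebraStr K H) (AA : HomAlgebraStr K A)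
    (act : H →ₗ[K] A →ₗ[K] A) (m : ℤ) (a : A) (h : H) (b : A) (g : H) : A ⊗[K] H :=
  TensorProduct.map
    ((AA.mul a) ∘ₗ (act.flip ((AA.str ^ (-1 : ℤ)) b)) ∘ₗ (HB.str ^ m).toLinearMap)
    ((HB.mul.flip g) ∘ₗ HB.str.toLinearMap)
    (HB.comul h)

/-- The `m`-Hom-smash coproduct comultiplication on simple tensors:
`Δ(a ⋊ h) = (a₁ ⋊ α^m(a₂₍₋₁₎)α⁻¹(h₁)) ⊗ (β(a₂₍₀₎) ⋊ h₂)`. -/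
def scComulElem (HB : HomBialgebraStr K H) (AC : HomCoalgebraStr K A)
    (coact : A →ₗ[K] H ⊗[K] A) (m : ℤ) (a : A) (h : H) :
    (A ⊗[K] H) ⊗[K] (A ⊗[K] H) :=
  TensorProduct.map
    (TensorProduct.map (LinearMap.id : A →ₗ[K] A)
        (TensorProduct.lift HB.mul ∘ₗ
          TensorProduct.map (HB.str ^ m).toLinearMap (HB.str ^ (-1 : ℤ)).toLinearMap) ∘ₗ
      (TensorProduct.assoc K A H H).toLinearMap)
    (TensorProduct.map AC.str.toLinearMap (LinearMap.id : H →ₗ[K] H))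
    (TensorProduct.tensorTensorTensorComm K (A ⊗[K] H) A H H
      ((TensorProduct.assoc K A H A).symm
          (TensorProduct.map (LinearMap.id : A →ₗ[K] A) coact (AC.comul a)) ⊗ₜ[K] HB.comul h))

/-- Condition (1) of Theorem 2.3. -/
def CPCond1 (HB : HomBialgebraStr K H) (AA : HomAlgebraStr K A)
    (σ : H →ₗ[K] H →ₗ[K] A) : Prop :=
  (∀ h : H, σ h HB.one = HB.counit h • AA.one) ∧
  (∀ h : H, σ HB.one h = HB.counit h • AA.one) ∧
  (∀ h g : H, σ (HB.str h) (HB.str g) = AA.str (σ h g))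

/-- Condition (2) of Theorem 2.3:
`[α^m(h₁l₁)·a] σ(α^{k+2}(h₂), α^{k+2}(l₂)) = σ(α^{k+2}(h₁), α^{k+2}(l₁)) [α^m(h₂l₂)·a]`. -/
def CPCond2 (HB : HomBialgebraStr K H) (AA : HomAlgebraStr K A)
    (act : H →ₗ[K] A →ₗ[K] A) (σ : H →ₗ[K] H →ₗ[K] A) (m k : ℤ) : Prop :=
  ∀ (h l : H) (a : A),
    TensorProduct.lift AA.mul
      (TensorProduct.map
        ((act.flip a) ∘ₗ (HB.str ^ m).toLinearMap ∘ₗ TensorProduct.lift HB.mul)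
        (TensorProduct.lift σ ∘ₗ
          TensorProduct.map (HB.str ^ (k+2)).toLinearMap (HB.str ^ (k+2)).toLinearMap)
        (TensorProduct.tensorTensorTensorComm K H H H H (HB.comul h ⊗ₜ[K] HB.comul l)))
    =
    TensorProduct.lift AA.mul
      (TensorProduct.map
        (TensorProduct.lift σ ∘ₗ
          TensorProduct.map (HB.str ^ (k+2)).toLinearMap (HB.str ^ (k+2)).toLinearMap)
        ((act.flip a) ∘ₗ (HB.str ^ m).toLinearMap ∘ₗ TensorProduct.lift HB.mul)
        (TensorProduct.tensorTensorTensorComm K H H H H (HB.comul h ⊗ₜ[K] HB.comul l)))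

/-- Condition (3) of Theorem 2.3:
`[α^{m+1}(h₁)·σ(α^{k+1}(l₁), α^{k+1}(g₁))] σ(α^{k+2}(h₂), α^{k+1}(l₂g₂))
  = σ(α^{k+2}(h₁), α^{k+2}(l₁)) σ(α^{k+1}(h₂l₂), α^{k+1}(g))`. -/
def CPCond3 (HB : HomBialgebraStr K H) (AA : HomAlgebraStr K A)
    (act : H →ₗ[K] A →ₗ[K] A) (σ : H →ₗ[K] H →ₗ[K] A) (m k : ℤ) : Prop :=
  ∀ h l g : H,
    TensorProduct.lift AA.mul
      (TensorProduct.map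
        (TensorProduct.lift act ∘ₗ
          TensorProduct.map (HB.str ^ (m+1)).toLinearMap
            (TensorProduct.lift σ ∘ₗ
              TensorProduct.map (HB.str ^ (k+1)).toLinearMap (HB.str ^ (k+1)).toLinearMap))
        (TensorProduct.lift σ ∘ₗ
          TensorProduct.map (HB.str ^ (k+2)).toLinearMap
            ((HB.str ^ (k+1)).toLinearMap ∘ₗ TensorProduct.lift HB.mul))
        (TensorProduct.tensorTensorTensorComm K H H (H ⊗[K] H) (H ⊗[K] H)
          (HB.comul h ⊗ₜ[K]
            (TensorProduct.tensorTensorTensorComm K H H H H (HB.comul l ⊗ₜ[K] HB.comul g)))))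
    =
    TensorProduct.lift AA.mul
      (TensorProduct.map
        (TensorProduct.lift σ ∘ₗ
          TensorProduct.map (HB.str ^ (k+2)).toLinearMap (HB.str ^ (k+2)).toLinearMap)
        ((σ.flip ((HB.str ^ (k+1)) g)) ∘ₗ (HB.str ^ (k+1)).toLinearMap ∘ₗ TensorProduct.lift HB.mul)
        (TensorProduct.tensorTensorTensorComm K H H H H (HB.comul h ⊗ₜ[K] HB.comul l)))

/-- `σ` is a twisted comodule cocycle:
`β(a₁) ⊗ α^{m+1}(a₂₍₋₁₎)g ⊗ a₂₍₀₎
  = a₁σ(α^{k+m+2}(a₂₍₋₁₎₁), α^{k+1}(g₁)) ⊗ α^{m+2}(a₂₍₋₁₎₂)α(g₂) ⊗ a₂₍₀₎`. -/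
def IsTwistedCocycle (HB : HomBialgebraStr K H) (AA : HomAlgebraStr K A)
    (AC : HomCoalgebraStr K A) (coact : A →ₗ[K] H ⊗[K] A)
    (σ : H →ₗ[K] H →ₗ[K] A) (m k : ℤ) : Prop :=
  ∀ (a : A) (g : H),
    (TensorProduct.assoc K A H A).symm
      (TensorProduct.map AA.str.toLinearMap
        (TensorProduct.map ((HB.mul.flip g) ∘ₗ (HB.str ^ (m+1)).toLinearMap)
          (LinearMap.id : A →ₗ[K] A))
        (TensorProduct.map (LinearMap.id : A →ₗ[K] A) coact (AC.comul a)))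
    =
    TensorProduct.map
      (TensorProduct.map (TensorProduct.lift AA.mul) (LinearMap.id : H →ₗ[K] H)
        ∘ₗ (TensorProduct.assoc K A A H).symm.toLinearMap
        ∘ₗ TensorProduct.map (LinearMap.id : A →ₗ[K] A)
            (TensorProduct.map
              (TensorProduct.lift σ ∘ₗ
                TensorProduct.map (HB.str ^ (k+m+2)).toLinearMap (HB.str ^ (k+1)).toLinearMap)
              (TensorProduct.lift HB.mul ∘ₗ
                TensorProduct.map (HB.str ^ (m+2)).toLinearMap HB.str.toLinearMap)
            ∘ₗ (TensorProduct.tensorTensorTensorComm K H H H H).toLinearMap)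
        ∘ₗ (TensorProduct.assoc K A (H ⊗[K] H) (H ⊗[K] H)).toLinearMap)
      (LinearMap.id : A →ₗ[K] A)
      ((TensorProduct.assoc K (A ⊗[K] (H ⊗[K] H)) (H ⊗[K] H) A).symm
        (TensorProduct.map (LinearMap.id : A ⊗[K] (H ⊗[K] H) →ₗ[K] A ⊗[K] (H ⊗[K] H))
          (TensorProduct.comm K A (H ⊗[K] H)).toLinearMap
          (TensorProduct.assoc K (A ⊗[K] (H ⊗[K] H)) A (H ⊗[K] H)
            ((TensorProduct.assoc K A (H ⊗[K] H) A).symm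
                (TensorProduct.map (LinearMap.id : A →ₗ[K] A)
                  (TensorProduct.map HB.comul (LinearMap.id : A →ₗ[K] A))
                  (TensorProduct.map (LinearMap.id : A →ₗ[K] A) coact (AC.comul a)))
              ⊗ₜ[K] HB.comul g))))

/-- Auxiliary map `(n ⊗ w) ⊗ t ↦ (α^j(n)·t) ⊗ f(w)` on `(H ⊗ M) ⊗ H`. -/
def coactMulAux (HB : HomBialgebraStr K H) (j : ℤ) (f : M →ₗ[K] M) :
    (H ⊗[K] M) ⊗[K] H →ₗ[K] H ⊗[K] M :=
  TensorProduct.map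
      (TensorProduct.lift HB.mul ∘ₗ
        TensorProduct.map (HB.str ^ j).toLinearMap (LinearMap.id : H →ₗ[K] H)) f
    ∘ₗ (TensorProduct.assoc K H H M).symm.toLinearMap
    ∘ₗ TensorProduct.map (LinearMap.id : H →ₗ[K] H) (TensorProduct.comm K M H).toLinearMap
    ∘ₗ (TensorProduct.assoc K H M H).toLinearMap

/-- (A1): `ε_A` is an algebra map. -/
def CondA1 (AA : HomAlgebraStr K A) (AC : HomCoalgebraStr K A) : Prop :=
  (∀ a b : A, AC.counit (AA.mul a b) = AC.counit a * AC.counit b) ∧ AC.counit AA.one = 1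

/-- (A2): `ε_A(h·a) = ε_H(h)ε_A(a)`. -/
def CondA2 (HB : HomBialgebraStr K H) (AC : HomCoalgebraStr K A)
    (act : H →ₗ[K] A →ₗ[K] A) : Prop :=
  ∀ (h : H) (a : A), AC.counit (act h a) = HB.counit h * AC.counit a

/-- (A3): `σ` is a coalgebra map. -/
def CondA3 (HB : HomBialgebraStr K H) (AC : HomCoalgebraStr K A)
    (σ : H →ₗ[K] H →ₗ[K] A) : Prop :=
  (∀ h g : H,
    AC.comul (σ h g)
      = TensorProduct.map (TensorProduct.lift σ) (TensorProduct.lift σ)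
          (TensorProduct.tensorTensorTensorComm K H H H H (HB.comul h ⊗ₜ[K] HB.comul g))) ∧
  (∀ h g : H, AC.counit (σ h g) = HB.counit h * HB.counit g)

/-- (A4): `Δ_A(1_A) = 1_A ⊗ 1_A`. -/
def CondA4 (AA : HomAlgebraStr K A) (AC : HomCoalgebraStr K A) : Prop :=
  AC.comul AA.one = AA.one ⊗ₜ[K] AA.one

/-- (A5): the coaction is an algebra map. -/
def CondA5 (HB : HomBialgebraStr K H) (AA : HomAlgebraStr K A)
    (coact : A →ₗ[K] H ⊗[K] A) : Prop :=
  (∀ a b : A,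
    coact (AA.mul a b)
      = TensorProduct.map (TensorProduct.lift HB.mul) (TensorProduct.lift AA.mul)
          (TensorProduct.tensorTensorTensorComm K H A H A (coact a ⊗ₜ[K] coact b))) ∧
  coact AA.one = HB.one ⊗ₜ[K] AA.one

/-- (A6). -/
def CondA6 (HB : HomBialgebraStr K H) (coact : A →ₗ[K] H ⊗[K] A)
    (σ : H →ₗ[K] H →ₗ[K] A) (m k : ℤ) : Prop :=
  ∀ h g : H,
    coactMulAux HB (m-1) (LinearMap.id : A →ₗ[K] A)
      (TensorProduct.map
        (coact ∘ₗ TensorProduct.lift σ ∘ₗ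
          TensorProduct.map (HB.str ^ (k+2)).toLinearMap (HB.str ^ (k+2)).toLinearMap)
        ((HB.str ^ (-1 : ℤ)).toLinearMap ∘ₗ TensorProduct.lift HB.mul)
        (TensorProduct.tensorTensorTensorComm K H H H H (HB.comul h ⊗ₜ[K] HB.comul g)))
    =
    TensorProduct.map (TensorProduct.lift HB.mul)
      (TensorProduct.lift σ ∘ₗ
        TensorProduct.map (HB.str ^ (k+1)).toLinearMap (HB.str ^ (k+1)).toLinearMap)
      (TensorProduct.tensorTensorTensorComm K H H H H (HB.comul h ⊗ₜ[K] HB.comul g))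

/-- (A7). -/
def CondA7 (HB : HomBialgebraStr K H) (AA : HomAlgebraStr K A) (AC : HomCoalgebraStr K A)
    (act : H →ₗ[K] A →ₗ[K] A) (coact : A →ₗ[K] H ⊗[K] A)
    (σ : H →ₗ[K] H →ₗ[K] A) (m k : ℤ) : Prop :=
  ∀ a b : A,
    AC.comul (AA.mul a b) =
      TensorProduct.map
        (TensorProduct.lift AA.mul
          ∘ₗ TensorProduct.map (LinearMap.id : A →ₗ[K] A)
              (TensorProduct.lift AA.mul
                ∘ₗ TensorProduct.map
                    (TensorProduct.lift act ∘ₗ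
                      TensorProduct.map (HB.str ^ (2*m)).toLinearMap (AA.str ^ (-2 : ℤ)).toLinearMap)
                    (TensorProduct.lift σ ∘ₗ
                      TensorProduct.map (HB.str ^ (k+m+1)).toLinearMap (HB.str ^ (k+m)).toLinearMap)
                ∘ₗ (TensorProduct.tensorTensorTensorComm K H H A H).toLinearMap)
          ∘ₗ (TensorProduct.assoc K A (H ⊗[K] H) (A ⊗[K] H)).toLinearMap)
        (AA.str.toLinearMap ∘ₗ TensorProduct.lift AA.mul)
        (TensorProduct.tensorTensorTensorComm K (A ⊗[K] (H ⊗[K] H)) A (A ⊗[K] H) A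
          ((TensorProduct.assoc K A (H ⊗[K] H) A).symm
              (TensorProduct.map (LinearMap.id : A →ₗ[K] A)
                (TensorProduct.map HB.comul (LinearMap.id : A →ₗ[K] A))
                (TensorProduct.map (LinearMap.id : A →ₗ[K] A) coact (AC.comul a)))
            ⊗ₜ[K]
            (TensorProduct.assoc K A H A).symm
              (TensorProduct.map (LinearMap.id : A →ₗ[K] A) coact (AC.comul b))))

/-- (A8). -/
def CondA8 (HB : HomBialgebraStr K H) (AA : HomAlgebraStr K A) (AC : HomCoalgebraStr K A)
    (act : H →ₗ[K] A →ₗ[K] A) (coact : A →ₗ[K] H ⊗[K] A)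
    (σ : H →ₗ[K] H →ₗ[K] A) (m k : ℤ) : Prop :=
  ∀ (h : H) (b : A),
    AC.comul (act ((HB.str ^ m) h) b) =
      TensorProduct.map
        (TensorProduct.lift AA.mul
          ∘ₗ TensorProduct.map
              (TensorProduct.lift act ∘ₗ
                TensorProduct.map (HB.str ^ m).toLinearMap (AA.str ^ (-1 : ℤ)).toLinearMap)
              (TensorProduct.lift σ ∘ₗ
                TensorProduct.map (HB.str ^ (k+1)).toLinearMap (HB.str ^ (k+m+1)).toLinearMap)
          ∘ₗ (TensorProduct.tensorTensorTensorComm K H H A H).toLinearMap)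
        (TensorProduct.lift act ∘ₗ
          TensorProduct.map (HB.str ^ m).toLinearMap AA.str.toLinearMap)
        (TensorProduct.tensorTensorTensorComm K (H ⊗[K] H) H (A ⊗[K] H) A
          (TensorProduct.map HB.comul (LinearMap.id : H →ₗ[K] H) (HB.comul h)
            ⊗ₜ[K]
            (TensorProduct.assoc K A H A).symm
              (TensorProduct.map (LinearMap.id : A →ₗ[K] A) coact (AC.comul b))))

/-- (A9). -/
def CondA9 (HB : HomBialgebraStr K H) (act : H →ₗ[K] A →ₗ[K] A)
    (coact : A →ₗ[K] H ⊗[K] A) (m : ℤ) : Prop :=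
  ∀ (h : H) (b : A),
    coactMulAux HB (m-1) (LinearMap.id : A →ₗ[K] A)
      (TensorProduct.map (coact ∘ₗ (act.flip b) ∘ₗ (HB.str ^ (m+1)).toLinearMap)
        (LinearMap.id : H →ₗ[K] H) (HB.comul h))
    =
    TensorProduct.map
      (TensorProduct.lift HB.mul ∘ₗ
        TensorProduct.map (LinearMap.id : H →ₗ[K] H) (HB.str ^ m).toLinearMap)
      (TensorProduct.lift act ∘ₗ
        TensorProduct.map (HB.str ^ m).toLinearMap (LinearMap.id : A →ₗ[K] A))
      (TensorProduct.tensorTensorTensorComm K H H H A (HB.comul h ⊗ₜ[K] coact b))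

/-- The Radford `[(m,k),m]`-biproduct structure on `A ⊗ H`. -/
structure IsRadfordBiproduct (HB : HomBialgebraStr K H) (AA : HomAlgebraStr K A)
    (AC : HomCoalgebraStr K A) (act : H →ₗ[K] A →ₗ[K] A) (coact : A →ₗ[K] H ⊗[K] A)
    (σ : H →ₗ[K] H →ₗ[K] A) (m k : ℤ) (B : HomBialgebraStr K (A ⊗[K] H)) : Prop where
  mul_def : ∀ (a : A) (h : H) (b : A) (g : H),
    B.mul (a ⊗ₜ[K] h) (b ⊗ₜ[K] g) = cpMulElem HB AA act σ m k a h b g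
  one_def : B.one = AA.one ⊗ₜ[K] HB.one
  comul_def : ∀ (a : A) (h : H), B.comul (a ⊗ₜ[K] h) = scComulElem HB AC coact m a h
  counit_def : ∀ (a : A) (h : H), B.counit (a ⊗ₜ[K] h) = AC.counit a * HB.counit h
  str_def : B.str = TensorProduct.congr AA.str HB.str

/-- `S_H` is a `σ`-antipode for `(H, α)`. -/
structure IsSigmaAntipode (HB : HomBialgebraStr K H) (AA : HomAlgebraStr K A)
    (σ : H →ₗ[K] H →ₗ[K] A) (S : H →ₗ[K] H) : Prop where
  antipode_str : ∀ h : H, S (HB.str h) = HB.str (S h)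
  right : ∀ h : H,
    TensorProduct.map (TensorProduct.lift σ) (TensorProduct.lift HB.mul)
        (TensorProduct.tensorTensorTensorComm K H H H H
          (TensorProduct.map HB.comul (HB.comul ∘ₗ S) (HB.comul h)))
      = HB.counit h • (AA.one ⊗ₜ[K] HB.one)
  left : ∀ h : H,
    TensorProduct.map (TensorProduct.lift σ) (TensorProduct.lift HB.mul)
        (TensorProduct.tensorTensorTensorComm K H H H H
          (TensorProduct.map (HB.comul ∘ₗ S) HB.comul (HB.comul h)))
      = HB.counit h • (AA.one ⊗ₜ[K] HB.one)

/-- `S_A` is a convolution inverse of `id_A`. -/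
def IsConvInvOfId (AA : HomAlgebraStr K A) (AC : HomCoalgebraStr K A)
    (SA : A →ₗ[K] A) : Prop :=
  (∀ a : A, TensorProduct.lift (AA.mul ∘ₗ SA) (AC.comul a) = AC.counit a • AA.one) ∧
  (∀ a : A, TensorProduct.lift (AA.mul.compl₂ SA) (AC.comul a) = AC.counit a • AA.one)

/-- `σ` and `σinv` are convolution inverses of each other. -/
def IsConvInvPair (HB : HomBialgebraStr K H) (AA : HomAlgebraStr K A)
    (σ σinv : H →ₗ[K] H →ₗ[K] A) : Prop :=
  (∀ h g : H,
    TensorProduct.lift AA.mul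
      (TensorProduct.map (TensorProduct.lift σ) (TensorProduct.lift σinv)
        (TensorProduct.tensorTensorTensorComm K H H H H (HB.comul h ⊗ₜ[K] HB.comul g)))
    = (HB.counit h * HB.counit g) • AA.one) ∧
  (∀ h g : H,
    TensorProduct.lift AA.mul
      (TensorProduct.map (TensorProduct.lift σinv) (TensorProduct.lift σ)
        (TensorProduct.tensorTensorTensorComm K H H H H (HB.comul h ⊗ₜ[K] HB.comul g)))
    = (HB.counit h * HB.counit g) • AA.one)

/-- The Radford antipode formula
`S(a ⊗ h) = (1_A ⊗ S_H(α^{m−1}(a₍₋₁₎)α⁻²(h)))·(S_A(a₍₀₎) ⊗ 1_H)`. -/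
def radfordAntipodeElem (HB : HomBialgebraStr K H) (AA : HomAlgebraStr K A)
    (coact : A →ₗ[K] H ⊗[K] A)
    (Bmul : (A ⊗[K] H) →ₗ[K] (A ⊗[K] H) →ₗ[K] (A ⊗[K] H))
    (SH : H →ₗ[K] H) (SA : A →ₗ[K] A) (m : ℤ) (a : A) (h : H) : A ⊗[K] H :=
  TensorProduct.lift Bmul
    (TensorProduct.map
      ((TensorProduct.mk K A H AA.one) ∘ₗ SH ∘ₗ (HB.mul.flip ((HB.str ^ (-2 : ℤ)) h)) ∘ₗ
        (HB.str ^ (m - 1)).toLinearMap)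
      (((TensorProduct.mk K A H).flip HB.one) ∘ₗ SA)
      (coact a))

/-- `φ^l(l ⊗ (a ⊗ h)) = (α(l₁₁)·β⁻¹(a)) σ(α^{k+2−m}(l₁₂), α^{k+1}(h₁)) ⊗ α^{1−m}(l₂)α(h₂)`. -/
def philElem (HB : HomBialgebraStr K H) (AA : HomAlgebraStr K A)
    (act : H →ₗ[K] A →ₗ[K] A) (σ : H →ₗ[K] H →ₗ[K] A) (m k : ℤ)
    (l : H) (a : A) (h : H) : A ⊗[K] H :=
  TensorProduct.map
    (TensorProduct.lift AA.mul ∘ₗ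
      TensorProduct.map ((act.flip ((AA.str ^ (-1 : ℤ)) a)) ∘ₗ HB.str.toLinearMap)
        (TensorProduct.lift σ ∘ₗ
          TensorProduct.map (HB.str ^ (k+2-m)).toLinearMap (HB.str ^ (k+1)).toLinearMap) ∘ₗ
      (TensorProduct.assoc K H H H).toLinearMap)
    (TensorProduct.lift HB.mul ∘ₗ
      TensorProduct.map (HB.str ^ (1-m)).toLinearMap HB.str.toLinearMap)
    (TensorProduct.map (TensorProduct.map HB.comul (LinearMap.id : H →ₗ[K] H))
      (LinearMap.id : H ⊗[K] H →ₗ[K] H ⊗[K] H)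
      (TensorProduct.tensorTensorTensorComm K H H H H (HB.comul l ⊗ₜ[K] HB.comul h)))

/-- `φ^r((a ⊗ h) ⊗ l) = a σ(α^{k+1}(h₁), α^{k+1−m}(l₁)) ⊗ α(h₂)α^{1−m}(l₂)`. -/
def phirElem (HB : HomBialgebraStr K H) (AA : HomAlgebraStr K A)
    (σ : H →ₗ[K] H →ₗ[K] A) (m k : ℤ) (a : A) (h : H) (l : H) : A ⊗[K] H :=
  TensorProduct.map
    ((AA.mul a) ∘ₗ TensorProduct.lift σ ∘ₗ
      TensorProduct.map (HB.str ^ (k+1)).toLinearMap (HB.str ^ (k+1-m)).toLinearMap)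
    (TensorProduct.lift HB.mul ∘ₗ
      TensorProduct.map HB.str.toLinearMap (HB.str ^ (1-m)).toLinearMap)
    (TensorProduct.tensorTensorTensorComm K H H H H (HB.comul h ⊗ₜ[K] HB.comul l))

/-- `(M, μ, φ)` is a left `(H, α, σ̄)`-Hom module. -/
def IsLeftSigmaHomModule (HB : HomBialgebraStr K H)
    (mulM : M →ₗ[K] M →ₗ[K] M) (strM : M →ₗ[K] M)
    (σbar : H →ₗ[K] H →ₗ[K] M) (φ : H →ₗ[K] M →ₗ[K] M) : Prop :=
  (∀ (g l : H) (x : M),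
    φ (HB.str g) (φ l x)
      = TensorProduct.lift mulM
          (TensorProduct.map (strM ∘ₗ TensorProduct.lift σbar)
            ((φ.flip x) ∘ₗ TensorProduct.lift HB.mul)
            (TensorProduct.tensorTensorTensorComm K H H H H (HB.comul g ⊗ₜ[K] HB.comul l))))
  ∧ (∀ x : M, φ HB.one x = strM x)

/-- `(M, μ, φ)` is a right `(H, α, σ̄)`-Hom module. -/
def IsRightSigmaHomModule (HB : HomBialgebraStr K H)
    (mulM : M →ₗ[K] M →ₗ[K] M) (strM : M →ₗ[K] M)
    (σbar : H →ₗ[K] H →ₗ[K] M) (φ : M →ₗ[K] H →ₗ[K] M) : Prop :=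
  (∀ (x : M) (l g : H),
    φ (φ x l) (HB.str g)
      = mulM (strM x)
          (TensorProduct.lift φ
            (TensorProduct.map (TensorProduct.lift σbar) (TensorProduct.lift HB.mul)
              (TensorProduct.tensorTensorTensorComm K H H H H (HB.comul l ⊗ₜ[K] HB.comul g)))))
  ∧ (∀ x : M, φ x HB.one = strM x)

/-- `(M, μ, φ⁺, φ⁻)` is a weak `(H, α)` Hom-bimodule. -/
def IsWeakHomBimodule (HB : HomBialgebraStr K H) (strM : M →ₗ[K] M)
    (φl : H →ₗ[K] M →ₗ[K] M) (φr : M →ₗ[K] H →ₗ[K] M) : Prop :=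
  (∀ x : M, φl HB.one x = strM x) ∧ (∀ x : M, φr x HB.one = strM x) ∧
  (∀ (h : H) (x : M) (g : H), φl (HB.str h) (φr x g) = φr (φl h x) (HB.str g))

/-- A weak `m`-Hom admissible mapping system `C ⇄ A ⇄ H`. -/
structure WeakAdmissibleSystem (HB : HomBialgebraStr K H)
    (CA : HomAlgebraStr K C) (CC : HomCoalgebraStr K C)
    (coact : C →ₗ[K] H ⊗[K] C) (m : ℤ) (AB : HomBialgebraStr K A)
    (j : C →ₗ[K] A) (p : A →ₗ[K] C) (i : H →ₗ[K] A) (π : A →ₗ[K] H) : Prop where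
  c_str_eq : CA.str = CC.str
  p_j : ∀ c : C, p (j c) = c
  pi_i : ∀ h : H, π (i h) = h
  pi_mul : ∀ a b : A, π (AB.mul a b) = HB.mul (π a) (π b)
  pi_one : π AB.one = HB.one
  pi_str : ∀ a : A, π (AB.str a) = HB.str (π a)
  pi_comul : ∀ a : A, TensorProduct.map π π (AB.comul a) = HB.comul (π a)
  pi_counit : ∀ a : A, HB.counit (π a) = AB.counit a
  i_one : i HB.one = AB.one
  i_str : ∀ h : H, i (HB.str h) = AB.str (i h)
  i_comul : ∀ h : H, TensorProduct.map i i (HB.comul h) = AB.comul (i h)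
  i_counit : ∀ h : H, AB.counit (i h) = HB.counit h
  p_str : ∀ a : A, p (AB.str a) = CC.str (p a)
  p_comul : ∀ a : A, TensorProduct.map p p (AB.comul a) = CC.comul (p a)
  p_counit : ∀ a : A, CC.counit (p a) = AB.counit a
  j_mul : ∀ c d : C, j (CA.mul c d) = AB.mul (j c) (j d)
  j_one : j CA.one = AB.one
  j_str : ∀ c : C, j (CC.str c) = AB.str (j c)
  p_left_act : ∀ (h : H) (a : A),
    p (AB.mul (i ((HB.str ^ (-m)) h)) a) = HB.counit h • CC.str (p a)
  p_right_act : ∀ (a : A) (h : H),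
    p (AB.mul a (i ((HB.str ^ (-m)) h))) = HB.counit h • CC.str (p a)
  sigma_mod : ∃ σbar : H →ₗ[K] H →ₗ[K] A,
    IsLeftSigmaHomModule HB AB.mul AB.str.toLinearMap σbar
        (AB.mul ∘ₗ i ∘ₗ (HB.str ^ (-m)).toLinearMap)
      ∧ IsRightSigmaHomModule HB AB.mul AB.str.toLinearMap σbar
        (AB.mul.compl₂ (i ∘ₗ (HB.str ^ (-m)).toLinearMap))
  sub_l : ∀ c : C, ∃ y : H ⊗[K] C,
    TensorProduct.map ((HB.str ^ (-m)).toLinearMap ∘ₗ π) (LinearMap.id : A →ₗ[K] A)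
        (AB.comul (j c))
      = TensorProduct.map (LinearMap.id : H →ₗ[K] H) j y
  sub_r : ∀ c : C, ∃ z : C ⊗[K] H,
    TensorProduct.map (LinearMap.id : A →ₗ[K] A) ((HB.str ^ (-m)).toLinearMap ∘ₗ π)
        (AB.comul (j c))
      = TensorProduct.map j (LinearMap.id : H →ₗ[K] H) z
  p_col : ∀ c : C,
    TensorProduct.map (LinearMap.id : H →ₗ[K] H) p
        (TensorProduct.map ((HB.str ^ (-m)).toLinearMap ∘ₗ π) (LinearMap.id : A →ₗ[K] A)
          (AB.comul (j c)))
      = coact c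
  p_cor : ∀ c : C,
    TensorProduct.map p (LinearMap.id : H →ₗ[K] H)
        (TensorProduct.map (LinearMap.id : A →ₗ[K] A) ((HB.str ^ (-m)).toLinearMap ∘ₗ π)
          (AB.comul (j c)))
      = CC.str.symm c ⊗ₜ[K] HB.one
  split : ∀ a : A,
    TensorProduct.lift AB.mul (TensorProduct.map (j ∘ₗ p) (i ∘ₗ π) (AB.comul a)) = a

/-- The map `f : C ♯ H → A`, `c ⊗ h ↦ γ⁻¹(j(c)i(h))`. -/
def admF (AB : HomBialgebraStr K A) (j : C →ₗ[K] A) (i : H →ₗ[K] A) :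
    C ⊗[K] H →ₗ[K] A :=
  AB.str.symm.toLinearMap ∘ₗ TensorProduct.lift ((AB.mul ∘ₗ j).compl₂ i)

/-- The map `g : A → C ♯ H`, `a ↦ β(p(a₁)) ⊗ α(π(a₂))`. -/
def admG (HB : HomBialgebraStr K H) (CC : HomCoalgebraStr K C)
    (AB : HomBialgebraStr K A) (p : A →ₗ[K] C) (π : A →ₗ[K] H) :
    A →ₗ[K] C ⊗[K] H :=
  TensorProduct.map (CC.str.toLinearMap ∘ₗ p) (HB.str.toLinearMap ∘ₗ π) ∘ₗ AB.comul

end Defs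
namespace RadfordAux

variable {K : Type*} [Field K]

lemma ezpow {M : Type*} [AddCommGroup M] [Module K M] (e : M ≃ₗ[K] M) (a b : ℤ) (x : M) :
    (e ^ a) ((e ^ b) x) = (e ^ (a + b)) x := by rw [zpow_add]; rfl

lemma esymm {M : Type*} [AddCommGroup M] [Module K M] (e : M ≃ₗ[K] M) (x : M) :
    e.symm x = (e ^ (-1 : ℤ)) x := by rw [zpow_neg_one]; rfl

lemma zpow_fix {M : Type*} [AddCommGroup M] [Module K M] (e : M ≃ₗ[K] M) (x : M)
    (hx : e x = x) : ∀ n : ℤ, (e ^ n) x = x := by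
  have hs : e.symm x = x := by
    apply e.injective; rw [LinearEquiv.apply_symm_apply, hx]
  intro n
  induction n using Int.induction_on with
  | zero => rfl
  | succ i ih => rw [show ((i : ℤ) + 1) = 1 + i by ring, ← ezpow, ih, zpow_one, hx]
  | pred i ih => rw [show (-(i : ℤ) - 1) = (-1) + (-i) by ring, ← ezpow, ih, ← esymm, hs]

lemma zpow_counit {M N : Type*} [AddCommGroup M] [Module K M] [AddCommGroup N] [Module K N]
    (e : M ≃ₗ[K] M) (f : M →ₗ[K] N) (hf : ∀ x, f (e x) = f x) :
    ∀ (n : ℤ) (x : M), f ((e ^ n) x) = f x := by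
  have hs : ∀ x, f (e.symm x) = f x := by
    intro x; conv_rhs => rw [← e.apply_symm_apply x, hf]
  intro n x
  induction n using Int.induction_on with
  | zero => rfl
  | succ i ih => rw [show ((i : ℤ) + 1) = 1 + i by ring, ← ezpow, zpow_one, hf, ih]
  | pred i ih => rw [show (-(i : ℤ) - 1) = (-1) + (-i) by ring, ← ezpow, ← esymm, hs, ih]

lemma zpow_mul2 {M : Type*} [AddCommGroup M] [Module K M] (e : M ≃ₗ[K] M)
    (mu : M →ₗ[K] M →ₗ[K] M) (h : ∀ x y, mu (e x) (e y) = e (mu x y)) :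
    ∀ (n : ℤ) (x y : M), mu ((e ^ n) x) ((e ^ n) y) = (e ^ n) (mu x y) := by
  have hs : ∀ x y, mu (e.symm x) (e.symm y) = e.symm (mu x y) := by
    intro x y; apply e.injective
    rw [← h, e.apply_symm_apply, e.apply_symm_apply, e.apply_symm_apply]
  intro n x y
  induction n using Int.induction_on with
  | zero => rfl
  | succ i ih =>
      rw [show ((i : ℤ) + 1) = 1 + i by ring, ← ezpow, ← ezpow, ← ezpow, zpow_one, h, ih]
  | pred i ih =>
      rw [show (-(i : ℤ) - 1) = (-1) + (-i) by ring, ← ezpow, ← ezpow, ← ezpow, ← esymm,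
        ← esymm, ← esymm, hs, ih]

lemma map_map_zpow {M : Type*} [AddCommGroup M] [Module K M] (e : M ≃ₗ[K] M) (a b : ℤ)
    (t : M ⊗[K] M) :
    TensorProduct.map (e ^ a).toLinearMap (e ^ a).toLinearMap
        (TensorProduct.map (e ^ b).toLinearMap (e ^ b).toLinearMap t)
      = TensorProduct.map (e ^ (a + b)).toLinearMap (e ^ (a + b)).toLinearMap t := by
  induction t using TensorProduct.induction_on with
  | zero => simp
  | tmul x y => simp [ezpow]
  | add p q hp hq => simp only [map_add, hp, hq]

lemma zpow_comap {M : Type*} [AddCommGroup M] [Module K M] (e : M ≃ₗ[K] M)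
    (cm : M →ₗ[K] M ⊗[K] M)
    (h : ∀ x, cm (e x) = TensorProduct.map e.toLinearMap e.toLinearMap (cm x)) :
    ∀ (n : ℤ) (x : M),
      cm ((e ^ n) x) = TensorProduct.map (e ^ n).toLinearMap (e ^ n).toLinearMap (cm x) := by
  have h1 : ∀ x, cm (e x)
      = TensorProduct.map (e ^ (1:ℤ)).toLinearMap (e ^ (1:ℤ)).toLinearMap (cm x) := by
    intro x; rw [h]; norm_num
  have hs : ∀ x, cm (e.symm x)
      = TensorProduct.map (e ^ (-1:ℤ)).toLinearMap (e ^ (-1:ℤ)).toLinearMap (cm x) := by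
    intro x
    have h2 := h1 (e.symm x)
    rw [e.apply_symm_apply] at h2
    conv_rhs => rw [h2, map_map_zpow]
    norm_num
  intro n x
  induction n using Int.induction_on with
  | zero => simp
  | succ i ih =>
      rw [show ((i : ℤ) + 1) = 1 + i by ring, ← ezpow, zpow_one, h1, ih, map_map_zpow]
  | pred i ih =>
      rw [show (-(i : ℤ) - 1) = (-1) + (-i) by ring, ← ezpow, ← esymm, hs, ih, map_map_zpow]

end RadfordAux

section RadfordAux2

open RadfordAux

variable {K H A : Type*} [Field K] [AddCommGroup H] [Module K H] [AddCommGroup A] [Module K A]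

lemma eq4 {M N P Q X : Type*} [AddCommGroup M] [Module K M] [AddCommGroup N] [Module K N]
    [AddCommGroup P] [Module K P] [AddCommGroup Q] [Module K Q] [AddCommGroup X] [Module K X]
    {f g : (M ⊗[K] N) ⊗[K] (P ⊗[K] Q) →ₗ[K] X}
    (h : ∀ x y u v, f ((x ⊗ₜ[K] y) ⊗ₜ[K] (u ⊗ₜ[K] v)) = g ((x ⊗ₜ[K] y) ⊗ₜ[K] (u ⊗ₜ[K] v)))
    (t : (M ⊗[K] N) ⊗[K] (P ⊗[K] Q)) : f t = g t := by
  induction t using TensorProduct.induction_on with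
  | zero => simp
  | tmul p q =>
      induction p using TensorProduct.induction_on with
      | zero => rw [TensorProduct.zero_tmul, map_zero, map_zero]
      | tmul x y =>
          induction q using TensorProduct.induction_on with
          | zero => rw [TensorProduct.tmul_zero, map_zero, map_zero]
          | tmul u v => exact h x y u v
          | add q1 q2 h1 h2 => rw [TensorProduct.tmul_add, map_add, map_add, h1, h2]
      | add p1 p2 h1 h2 => rw [TensorProduct.add_tmul, map_add, map_add, h1, h2]
  | add t1 t2 h1 h2 => rw [map_add, map_add, h1, h2]

lemma ttt_nat (f g f' g' : H →ₗ[K] H) (p q : H ⊗[K] H) :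
    TensorProduct.tensorTensorTensorComm K H H H H
        ((TensorProduct.map f g p) ⊗ₜ[K] (TensorProduct.map f' g' q))
      = TensorProduct.map (TensorProduct.map f f') (TensorProduct.map g g')
          (TensorProduct.tensorTensorTensorComm K H H H H (p ⊗ₜ[K] q)) := by
  induction p using TensorProduct.induction_on with
  | zero => simp
  | tmul x y =>
      induction q using TensorProduct.induction_on with
      | zero => simp
      | tmul u v => simp [TensorProduct.tensorTensorTensorComm_tmul]
      | add q1 q2 h1 h2 =>
          rw [map_add, TensorProduct.tmul_add, TensorProduct.tmul_add, map_add, map_add,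
            h1, h2, map_add]
  | add p1 p2 h1 h2 =>
      rw [map_add, TensorProduct.add_tmul, TensorProduct.add_tmul, map_add, map_add,
        h1, h2, map_add]

/-- The normal form of the `σ`-part of products `(a ♯ h)(b ♯ g)` with `b = 1`. -/
def Theta (HB : HomBialgebraStr K H) (AA : HomAlgebraStr K A) (σ : H →ₗ[K] H →ₗ[K] A)
    (n j c : ℤ) : (H ⊗[K] H) ⊗[K] (H ⊗[K] H) →ₗ[K] A ⊗[K] H :=
  TensorProduct.map
    ((AA.str ^ j).toLinearMap ∘ₗ TensorProduct.lift σ ∘ₗ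
      TensorProduct.map (HB.str ^ n).toLinearMap (HB.str ^ n).toLinearMap)
    ((HB.str ^ c).toLinearMap ∘ₗ TensorProduct.lift HB.mul)

lemma Theta_tmul (HB : HomBialgebraStr K H) (AA : HomAlgebraStr K A) (σ : H →ₗ[K] H →ₗ[K] A)
    (n j c : ℤ) (x y u v : H) :
    Theta HB AA σ n j c ((x ⊗ₜ[K] y) ⊗ₜ[K] (u ⊗ₜ[K] v))
      = (AA.str ^ j) (σ ((HB.str ^ n) x) ((HB.str ^ n) y))
          ⊗ₜ[K] (HB.str ^ c) (HB.mul u v) := by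
  simp [Theta]

lemma Theta_post (HB : HomBialgebraStr K H) (AA : HomAlgebraStr K A) (σ : H →ₗ[K] H →ₗ[K] A)
    (d e n j c : ℤ) (t : (H ⊗[K] H) ⊗[K] (H ⊗[K] H)) :
    TensorProduct.map (AA.str ^ d).toLinearMap (HB.str ^ e).toLinearMap
        (Theta HB AA σ n j c t)
      = Theta HB AA σ n (d + j) (e + c) t := by
  rw [← LinearMap.comp_apply]
  refine eq4 (fun x y u v => ?_) t
  simp [Theta_tmul, ezpow]

lemma Theta_precomp (HB : HomBialgebraStr K H) (AA : HomAlgebraStr K A)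
    (σ : H →ₗ[K] H →ₗ[K] A) (n j c e : ℤ) (t : (H ⊗[K] H) ⊗[K] (H ⊗[K] H)) :
    Theta HB AA σ n j c
        (TensorProduct.map
          (TensorProduct.map (HB.str ^ e).toLinearMap (HB.str ^ e).toLinearMap)
          (TensorProduct.map (HB.str ^ e).toLinearMap (HB.str ^ e).toLinearMap) t)
      = Theta HB AA σ (n + e) j (c + e) t := by
  rw [← LinearMap.comp_apply]
  refine eq4 (fun x y u v => ?_) t
  have hbmul := zpow_mul2 HB.str HB.mul (fun x y => (HB.str_mul x y).symm)
  simp only [LinearMap.comp_apply, TensorProduct.map_tmul, LinearEquiv.coe_coe, Theta_tmul]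
  rw [ezpow, ezpow, hbmul, ezpow]

lemma Theta_shift (HB : HomBialgebraStr K H) (AA : HomAlgebraStr K A)
    (σ : H →ₗ[K] H →ₗ[K] A) (n j c e : ℤ) (h g : H) :
    Theta HB AA σ n j c
        (TensorProduct.tensorTensorTensorComm K H H H H
          (HB.comul ((HB.str ^ e) h) ⊗ₜ[K] HB.comul ((HB.str ^ e) g)))
      = Theta HB AA σ (n + e) j (c + e)
          (TensorProduct.tensorTensorTensorComm K H H H H
            (HB.comul h ⊗ₜ[K] HB.comul g)) := by
  rw [zpow_comap HB.str HB.comul HB.comul_str e, zpow_comap HB.str HB.comul HB.comul_str e,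
    ttt_nat, Theta_precomp]

end RadfordAux2

section RadfordAux3

open RadfordAux TensorProduct

variable {K H A : Type*} [Field K] [AddCommGroup H] [Module K H] [AddCommGroup A] [Module K A]
variable (HB : HomBialgebraStr K H) (AA : HomAlgebraStr K A)
variable (act : H →ₗ[K] A →ₗ[K] A) (σ : H →ₗ[K] H →ₗ[K] A) (m k : ℤ)

lemma congr_app {M N P Q : Type*} [AddCommGroup M] [Module K M] [AddCommGroup N] [Module K N]
    [AddCommGroup P] [Module K P] [AddCommGroup Q] [Module K Q]
    (f : M ≃ₗ[K] P) (g : N ≃ₗ[K] Q) (t : M ⊗[K] N) :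
    (TensorProduct.congr f g) t = TensorProduct.map f.toLinearMap g.toLinearMap t := rfl

/-- `(a ♯ h)(1 ♯ g) = a σ(α^k h₁, α^k g₁) ♯ α(h₂ g₂)` in normal form. -/
lemma cp_core (hact1 : ∀ h : H, act h AA.one = HB.counit h • AA.one)
    (a : A) (h g : H) :
    cpMulElem HB AA act σ m k a h AA.one g
      = TensorProduct.map
          ((AA.mul a) ∘ₗ AA.str.toLinearMap ∘ₗ TensorProduct.lift σ ∘ₗ
            TensorProduct.map (HB.str ^ k).toLinearMap (HB.str ^ k).toLinearMap)
          (HB.str.toLinearMap ∘ₗ TensorProduct.lift HB.mul)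
          (TensorProduct.tensorTensorTensorComm K H H H H (HB.comul h ⊗ₜ[K] HB.comul g)) := by
  simp only [cpMulElem]
  simp only [← LinearMap.comp_apply]
  refine eq4 (fun x y u v => ?_) _
  simp only [LinearMap.comp_apply, TensorProduct.map_tmul, LinearMap.id_coe, id_eq]
  congr 1
  have hw : ∀ w : H ⊗[K] H,
      (AA.mul a) (TensorProduct.lift AA.mul
        (TensorProduct.map
          ((act.flip ((AA.str ^ (-2 : ℤ)) AA.one)) ∘ₗ (HB.str ^ m).toLinearMap)
          (TensorProduct.lift σ ∘ₗ
            TensorProduct.map (HB.str ^ (k+1)).toLinearMap (HB.str ^ k).toLinearMap)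
          ((TensorProduct.assoc K H H H).toLinearMap (w ⊗ₜ[K] y))))
      = (AA.mul a) (AA.str (σ ((HB.str ^ (k+1))
          ((TensorProduct.lid K H) (TensorProduct.map HB.counit LinearMap.id w)))
          ((HB.str ^ k) y))) := by
    intro w
    induction w using TensorProduct.induction_on with
    | zero => simp
    | tmul w1 w2 =>
        simp only [LinearEquiv.coe_coe, TensorProduct.assoc_tmul, TensorProduct.map_tmul,
          LinearMap.comp_apply, TensorProduct.lift.tmul, LinearMap.flip_apply,
          TensorProduct.lid_tmul, LinearMap.id_coe, id_eq]
        rw [zpow_fix AA.str AA.one AA.str_one, hact1,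
          zpow_counit HB.str HB.counit HB.counit_str m w1]
        simp only [map_smul, LinearMap.smul_apply, AA.one_mul]
    | add w1 w2 h1 h2 =>
        simp only [TensorProduct.add_tmul, map_add, LinearMap.add_apply, h1, h2]
  rw [hw (HB.comul x)]
  rw [HB.counit_comul_left, esymm, ezpow, show (k+1) + (-1:ℤ) = k by ring]
  simp [LinearMap.comp_apply]

lemma F2 {B : HomBialgebraStr K (A ⊗[K] H)} {AC : HomCoalgebraStr K A}
    {coact : A →ₗ[K] H ⊗[K] A}
    (hB : IsRadfordBiproduct HB AA AC act coact σ m k B)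
    (hact1 : ∀ h : H, act h AA.one = HB.counit h • AA.one) (h g : H) :
    B.mul (AA.one ⊗ₜ[K] h) (AA.one ⊗ₜ[K] g)
      = Theta HB AA σ k 2 1
          (TensorProduct.tensorTensorTensorComm K H H H H (HB.comul h ⊗ₜ[K] HB.comul g)) := by
  rw [hB.mul_def, cp_core HB AA act σ m k hact1]
  refine eq4 (fun x y u v => ?_) _
  simp only [LinearMap.comp_apply, TensorProduct.map_tmul, Theta_tmul, LinearEquiv.coe_coe,
    TensorProduct.lift.tmul]
  rw [AA.one_mul, show (2:ℤ) = 1 + 1 by norm_num, ← ezpow, zpow_one, zpow_one]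

lemma F1 {B : HomBialgebraStr K (A ⊗[K] H)} {AC : HomCoalgebraStr K A}
    {coact : A →ₗ[K] H ⊗[K] A}
    (hB : IsRadfordBiproduct HB AA AC act coact σ m k B)
    (hact1 : ∀ h : H, act h AA.one = HB.counit h • AA.one) (s : A) (w : H) :
    B.mul (s ⊗ₜ[K] HB.one) (AA.one ⊗ₜ[K] w) = AA.str s ⊗ₜ[K] HB.str w := by
  have P1 : Theta HB AA σ k 2 1
      (TensorProduct.tensorTensorTensorComm K H H H H
        (HB.comul HB.one ⊗ₜ[K] HB.comul w)) = AA.one ⊗ₜ[K] HB.str w := by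
    rw [← F2 HB AA act σ m k hB hact1, ← hB.one_def, B.one_mul, hB.str_def,
      TensorProduct.congr_tmul, AA.str_one]
  have e := eq4 (K := K)
    (f := TensorProduct.map
          ((AA.mul s) ∘ₗ AA.str.toLinearMap ∘ₗ TensorProduct.lift σ ∘ₗ
            TensorProduct.map (HB.str ^ k).toLinearMap (HB.str ^ k).toLinearMap)
          (HB.str.toLinearMap ∘ₗ TensorProduct.lift HB.mul))
    (g := (TensorProduct.map ((AA.mul s) ∘ₗ (AA.str ^ (-1:ℤ)).toLinearMap) LinearMap.id)
          ∘ₗ Theta HB AA σ k 2 1)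
    (fun x y u v => by
      simp only [LinearMap.comp_apply, TensorProduct.map_tmul, Theta_tmul,
        LinearEquiv.coe_coe, TensorProduct.lift.tmul, LinearMap.id_coe, id_eq]
      rw [ezpow, show (-1:ℤ) + 2 = 1 by norm_num, zpow_one, zpow_one])
    (TensorProduct.tensorTensorTensorComm K H H H H (HB.comul HB.one ⊗ₜ[K] HB.comul w))
  rw [hB.mul_def, cp_core HB AA act σ m k hact1, e, LinearMap.comp_apply, P1,
    TensorProduct.map_tmul]
  simp only [LinearMap.comp_apply, LinearEquiv.coe_coe, LinearMap.id_coe, id_eq]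
  rw [zpow_fix AA.str AA.one AA.str_one, AA.mul_one]

end RadfordAux3

section RadfordAux4

open RadfordAux TensorProduct

variable {K H A : Type*} [Field K] [AddCommGroup H] [Module K H] [AddCommGroup A] [Module K A]
variable (HB : HomBialgebraStr K H) (AA : HomAlgebraStr K A)
variable (act : H →ₗ[K] A →ₗ[K] A) (σ : H →ₗ[K] H →ₗ[K] A) (m k : ℤ)

lemma star_phil {B : HomBialgebraStr K (A ⊗[K] H)} {AC : HomCoalgebraStr K A}
    {coact : A →ₗ[K] H ⊗[K] A}
    (hB : IsRadfordBiproduct HB AA AC act coact σ m k B)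
    (φl : H →ₗ[K] (A ⊗[K] H) →ₗ[K] (A ⊗[K] H))
    (hφl : ∀ (l : H) (a : A) (h : H), φl l (a ⊗ₜ[K] h) = philElem HB AA act σ m k l a h)
    (l : H) (x : A ⊗[K] H) :
    φl l x = B.mul (AA.one ⊗ₜ[K] (HB.str ^ (-m)) l) x := by
  induction x using TensorProduct.induction_on with
  | zero => simp
  | add x1 x2 h1 h2 => rw [map_add, map_add, h1, h2]
  | tmul a h =>
      apply B.str.injective
      rw [B.str_mul, hφl]
      have hsl : B.str (AA.one ⊗ₜ[K] (HB.str ^ (-m)) l)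
          = AA.one ⊗ₜ[K] (HB.str ^ (1-m)) l := by
        rw [hB.str_def, TensorProduct.congr_tmul, AA.str_one]
        congr 1
        have e1 := ezpow HB.str 1 (-m) l
        rw [zpow_one] at e1
        rw [e1, show (1:ℤ) + -m = 1 - m by ring]
      have hsx : B.str (a ⊗ₜ[K] h) = AA.str a ⊗ₜ[K] HB.str h := by
        rw [hB.str_def, TensorProduct.congr_tmul]
      rw [hsl, hsx, hB.mul_def, hB.str_def, congr_app]
      simp only [philElem, cpMulElem]
      rw [zpow_comap HB.str HB.comul HB.comul_str (1-m) l,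
        show HB.comul (HB.str h)
            = TensorProduct.map HB.str.toLinearMap HB.str.toLinearMap (HB.comul h) from
          HB.comul_str h,
        ttt_nat]
      simp only [← LinearMap.comp_apply]
      refine eq4 (fun x y u v => ?_) _
      simp only [LinearMap.comp_apply, TensorProduct.map_tmul, LinearMap.id_coe, id_eq,
        LinearEquiv.coe_coe]
      rw [zpow_comap HB.str HB.comul HB.comul_str (1-m) x]
      congr 1
      generalize HB.comul x = w
      induction w using TensorProduct.induction_on with
      | zero => simp
      | tmul w1 w2 =>
          simp only [TensorProduct.map_tmul, LinearEquiv.coe_coe, TensorProduct.assoc_tmul,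
            LinearMap.comp_apply, TensorProduct.lift.tmul, LinearMap.flip_apply]
          rw [AA.one_mul, ezpow, show m + (1-m) = (1:ℤ) by ring, zpow_one]
          have ha : (AA.str ^ (-2:ℤ)) (AA.str a) = (AA.str ^ (-1:ℤ)) a := by
            have e1 := ezpow AA.str (-2) 1 a
            rw [show (-2:ℤ) + 1 = -1 by ring] at e1
            rw [show AA.str a = (AA.str ^ (1:ℤ)) a from by rw [zpow_one], e1]
          rw [ha, ezpow, show (k+1) + (1-m) = k + 2 - m by ring]
          have hy : (HB.str ^ k) (HB.str y) = (HB.str ^ (k+1)) y := by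
            have e1 := ezpow HB.str k 1 y
            rw [show HB.str y = (HB.str ^ (1:ℤ)) y from by rw [zpow_one], e1]
          rw [hy]
      | add w1 w2 h1 h2 =>
          simp only [TensorProduct.add_tmul, map_add, LinearMap.add_apply, h1, h2]

lemma F3 {B : HomBialgebraStr K (A ⊗[K] H)} {AC : HomCoalgebraStr K A}
    {coact : A →ₗ[K] H ⊗[K] A}
    (hB : IsRadfordBiproduct HB AA AC act coact σ m k B)
    (hact1 : ∀ h : H, act h AA.one = HB.counit h • AA.one) (g l : H) :
    Theta HB AA σ (k - m) 2 (1 - m)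
        (TensorProduct.tensorTensorTensorComm K H H H H (HB.comul g ⊗ₜ[K] HB.comul l))
      = Theta HB AA σ (k + 1 - m) 1 (1 - m)
        (TensorProduct.tensorTensorTensorComm K H H H H (HB.comul g ⊗ₜ[K] HB.comul l)) := by
  have E1 : ∀ h' g' : H,
      Theta HB AA σ k 3 2
          (TensorProduct.tensorTensorTensorComm K H H H H (HB.comul h' ⊗ₜ[K] HB.comul g'))
        = Theta HB AA σ (k+1) 2 2
          (TensorProduct.tensorTensorTensorComm K H H H H
            (HB.comul h' ⊗ₜ[K] HB.comul g')) := by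
    intro h' g'
    have hsm := B.str_mul (AA.one ⊗ₜ[K] h') (AA.one ⊗ₜ[K] g')
    rw [F2 HB AA act σ m k hB hact1 h' g'] at hsm
    simp only [hB.str_def, congr_app, TensorProduct.map_tmul, LinearEquiv.coe_coe,
      AA.str_one] at hsm
    rw [show AA.str.toLinearMap = (AA.str ^ (1:ℤ)).toLinearMap from by rw [zpow_one],
      show HB.str.toLinearMap = (HB.str ^ (1:ℤ)).toLinearMap from by rw [zpow_one],
      Theta_post] at hsm
    rw [show HB.str h' = (HB.str ^ (1:ℤ)) h' from by rw [zpow_one],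
      show HB.str g' = (HB.str ^ (1:ℤ)) g' from by rw [zpow_one],
      F2 HB AA act σ m k hB hact1, Theta_shift] at hsm
    rw [show (1:ℤ)+2 = 3 by norm_num, show (1:ℤ)+1 = 2 by norm_num] at hsm
    exact hsm
  have E2 := E1 ((HB.str ^ (-m)) g) ((HB.str ^ (-m)) l)
  rw [Theta_shift, Theta_shift, show k + -m = k - m by ring,
    show (2:ℤ) + -m = 2 - m by ring, show k + 1 + -m = k + 1 - m by ring] at E2
  have E3 := congrArg
    (TensorProduct.map (AA.str ^ (-1:ℤ)).toLinearMap (HB.str ^ (-1:ℤ)).toLinearMap) E2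
  rw [Theta_post, Theta_post, show (-1:ℤ) + 3 = 2 by norm_num,
    show (-1:ℤ) + 2 = 1 by norm_num, show (-1:ℤ) + (2 - m) = 1 - m by ring] at E3
  exact E3

end RadfordAux4

open RadfordAux in
/-- Lemma 4.7: `(A ♯_σ^× H, β ⊗ α, φ^l)` is a left `(H, α, σ̄)`-Hom module. -/
theorem biproduct_left_sigma_module
    {K H A : Type*} [Field K] [AddCommGroup H] [Module K H] [AddCommGroup A] [Module K A]
    (HB : HomBialgebraStr K H) (AA : HomAlgebraStr K A) (AC : HomCoalgebraStr K A)
    (act : H →ₗ[K] A →ₗ[K] A) (hact : IsWeakModuleAlgebra HB AA act)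
    (coact : A →ₗ[K] H ⊗[K] A) (hcc : IsComoduleCoalgebra HB AC coact)
    (σ σinv : H →ₗ[K] H →ₗ[K] A)
    (hconv : IsConvInvPair HB AA σ σinv) (m k : ℤ)
    (B : HomBialgebraStr K (A ⊗[K] H))
    (hB : IsRadfordBiproduct HB AA AC act coact σ m k B)
    (φl : H →ₗ[K] (A ⊗[K] H) →ₗ[K] (A ⊗[K] H))
    (hφl : ∀ (l : H) (a : A) (h : H), φl l (a ⊗ₜ[K] h) = philElem HB AA act σ m k l a h)
    (σbar : H →ₗ[K] H →ₗ[K] A ⊗[K] H)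
    (hσbar : ∀ h l : H,
      σbar h l = σ ((HB.str ^ (k+1-m)) h) ((HB.str ^ (k+1-m)) l) ⊗ₜ[K] HB.one) :
    IsLeftSigmaHomModule HB B.mul
      (TensorProduct.map AA.str.toLinearMap HB.str.toLinearMap) σbar φl := by
  have hact1 := hact.act_one
  constructor
  · intro g l x
    have hR : TensorProduct.lift B.mul
        (TensorProduct.map
          ((TensorProduct.map AA.str.toLinearMap HB.str.toLinearMap) ∘ₗ
            TensorProduct.lift σbar)
          ((φl.flip x) ∘ₗ TensorProduct.lift HB.mul)
          (TensorProduct.tensorTensorTensorComm K H H H H (HB.comul g ⊗ₜ[K] HB.comul l)))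
        = B.mul (Theta HB AA σ (k+1-m) 1 (1-m)
            (TensorProduct.tensorTensorTensorComm K H H H H (HB.comul g ⊗ₜ[K] HB.comul l)))
            (B.str x) := by
      conv_rhs => rw [← LinearMap.flip_apply (f := B.mul)]
      simp only [← LinearMap.comp_apply]
      refine eq4 (fun p q r s => ?_) _
      simp only [LinearMap.comp_apply, TensorProduct.map_tmul, TensorProduct.lift.tmul,
        LinearMap.flip_apply, Theta_tmul, LinearEquiv.coe_coe]
      rw [hσbar, TensorProduct.map_tmul]
      simp only [LinearEquiv.coe_coe]
      rw [HB.str_one, star_phil HB AA act σ m k hB φl hφl (HB.mul r s) x]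
      have hst : AA.str (σ ((HB.str ^ (k+1-m)) p) ((HB.str ^ (k+1-m)) q)) ⊗ₜ[K] HB.one
          = B.str ((σ ((HB.str ^ (k+1-m)) p) ((HB.str ^ (k+1-m)) q)) ⊗ₜ[K] HB.one) := by
        rw [hB.str_def, TensorProduct.congr_tmul, HB.str_one]
      rw [hst, B.hom_assoc, F1 HB AA act σ m k hB hact1, zpow_one]
      have hw : HB.str ((HB.str ^ (-m)) (HB.mul r s)) = (HB.str ^ (1-m)) (HB.mul r s) := by
        have e1 := ezpow HB.str 1 (-m) (HB.mul r s)
        rw [show (1:ℤ) + -m = 1 - m by ring] at e1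
        rw [show HB.str ((HB.str ^ (-m)) (HB.mul r s))
            = (HB.str ^ (1:ℤ)) ((HB.str ^ (-m)) (HB.mul r s)) from by rw [zpow_one], e1]
      rw [hw]
    rw [star_phil HB AA act σ m k hB φl hφl (HB.str g) (φl l x),
      star_phil HB AA act σ m k hB φl hφl l x]
    have h1 : (HB.str ^ (-m)) (HB.str g) = (HB.str ^ (1-m)) g := by
      have e1 := ezpow HB.str (-m) 1 g
      rw [show -m + (1:ℤ) = 1 - m by ring] at e1
      rw [show HB.str g = (HB.str ^ (1:ℤ)) g from by rw [zpow_one], e1]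
    rw [h1]
    have h2 : (AA.one ⊗ₜ[K] (HB.str ^ (1-m)) g : A ⊗[K] H)
        = B.str (AA.one ⊗ₜ[K] (HB.str ^ (-m)) g) := by
      rw [hB.str_def, TensorProduct.congr_tmul, AA.str_one]
      congr 1
      have e1 := ezpow HB.str 1 (-m) g
      rw [show (1:ℤ) + -m = 1 - m by ring] at e1
      rw [show HB.str ((HB.str ^ (-m)) g)
          = (HB.str ^ (1:ℤ)) ((HB.str ^ (-m)) g) from by rw [zpow_one], e1]
    rw [h2, B.hom_assoc, F2 HB AA act σ m k hB hact1 ((HB.str ^ (-m)) g) ((HB.str ^ (-m)) l),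
      Theta_shift, show k + -m = k - m by ring, show (1:ℤ) + -m = 1 - m by ring,
      F3 HB AA act σ m k hB hact1 g l]
    exact hR.symm
  · intro x
    rw [star_phil HB AA act σ m k hB φl hφl HB.one x,
      zpow_fix HB.str HB.one HB.str_one, ← hB.one_def, B.one_mul, hB.str_def, congr_app]
end
end

section
/- Let (A ♯_σ^× H, β ⊗ α) be a Radford [(m,k),m]-biproduct monoidal Hom-bialgebra with σ convolution invertible. Define φ^r: (A ⊗ H) ⊗ H → A ⊗ H by φ^r((a ⊗ h) ⊗ l) = a σ(α^{k+1}(h₁), α^{k+1−m}(l₁)) ⊗ α(h₂)α^{1−m}(l₂), and σ̄: H ⊗ H → A ⊗ H by σ̄(h ⊗ l) = σ(α^{k+1−m}(h), α^{k+1−m}(l)) ⊗ 1_H. Then (A ♯_σ^× H, β ⊗ α, φ^r) is a right (H, α, σ̄)-Hom module: φ^r(φ^r(x ⊗ l) ⊗ α(g)) = (β ⊗ α)(x) · φ^r(σ̄(l₁, g₁) ⊗ l₂g₂) and φ^r(x ⊗ 1_H) = (β ⊗ α)(x) for all l, g ∈ H and x ∈ A ⊗ H. -/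
open TensorProduct

noncomputable section

section Generic
variable {K : Type*} [Field K] {M N : Type*} [AddCommGroup M] [Module K M]
  [AddCommGroup N] [Module K N]

/-- commute a linear map past zpowers of equivalences -/
theorem zpow_comm_map (g : M →ₗ[K] N) (e : M ≃ₗ[K] M) (e' : N ≃ₗ[K] N)
    (hcomm : ∀ x, g (e x) = e' (g x)) : ∀ (j : ℤ) (x : M), g ((e ^ j) x) = (e' ^ j) (g x) := by
  have hsymm : ∀ x, g (e.symm x) = e'.symm (g x) := by
    intro x
    have h := hcomm (e.symm x)
    rw [e.apply_symm_apply] at h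
    rw [h, e'.symm_apply_apply]
  intro j
  induction j using Int.induction_on with
  | zero => intro x; simp
  | succ i ih =>
      intro x
      have h1 : ((e : M ≃ₗ[K] M) ^ ((i : ℤ) + 1)) x = (e ^ (i : ℤ)) (e x) := by
        rw [zpow_add_one]; rfl
      rw [h1, ih, hcomm]
      have h2 : ((e' : N ≃ₗ[K] N) ^ ((i : ℤ) + 1)) (g x) = (e' ^ (i : ℤ)) (e' (g x)) := by
        rw [zpow_add_one]; rfl
      rw [h2]
  | pred i ih =>
      intro x
      have h1 : ((e : M ≃ₗ[K] M) ^ (-(i : ℤ) - 1)) x = (e ^ (-(i : ℤ))) (e.symm x) := by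
        rw [zpow_sub_one]; rfl
      rw [h1, ih, hsymm]
      have h2 : ((e' : N ≃ₗ[K] N) ^ (-(i : ℤ) - 1)) (g x) = (e' ^ (-(i : ℤ))) (e'.symm (g x)) := by
        rw [zpow_sub_one]; rfl
      rw [h2]

theorem zpow_comm_map2 {P : Type*} [AddCommGroup P] [Module K P]
    (g : M →ₗ[K] N →ₗ[K] P) (e : M ≃ₗ[K] M) (f : N ≃ₗ[K] N) (e' : P ≃ₗ[K] P)
    (hcomm : ∀ x y, g (e x) (f y) = e' (g x y)) :
    ∀ (j : ℤ) (x : M) (y : N), g ((e ^ j) x) ((f ^ j) y) = (e' ^ j) (g x y) := by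
  have hsymm : ∀ x y, g (e.symm x) (f.symm y) = e'.symm (g x y) := by
    intro x y
    have h := hcomm (e.symm x) (f.symm y)
    rw [e.apply_symm_apply, f.apply_symm_apply] at h
    rw [h, e'.symm_apply_apply]
  intro j
  induction j using Int.induction_on with
  | zero => intro x y; simp
  | succ i ih =>
      intro x y
      have h1 : ((e : M ≃ₗ[K] M) ^ ((i : ℤ) + 1)) x = (e ^ (i : ℤ)) (e x) := by
        rw [zpow_add_one]; rfl
      have h1' : ((f : N ≃ₗ[K] N) ^ ((i : ℤ) + 1)) y = (f ^ (i : ℤ)) (f y) := by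
        rw [zpow_add_one]; rfl
      have h2 : ((e' : P ≃ₗ[K] P) ^ ((i : ℤ) + 1)) (g x y) = (e' ^ (i : ℤ)) (e' (g x y)) := by
        rw [zpow_add_one]; rfl
      rw [h1, h1', ih, hcomm, h2]
  | pred i ih =>
      intro x y
      have h1 : ((e : M ≃ₗ[K] M) ^ (-(i : ℤ) - 1)) x = (e ^ (-(i : ℤ))) (e.symm x) := by
        rw [zpow_sub_one]; rfl
      have h1' : ((f : N ≃ₗ[K] N) ^ (-(i : ℤ) - 1)) y = (f ^ (-(i : ℤ))) (f.symm y) := by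
        rw [zpow_sub_one]; rfl
      have h2 : ((e' : P ≃ₗ[K] P) ^ (-(i : ℤ) - 1)) (g x y) = (e' ^ (-(i : ℤ))) (e'.symm (g x y)) := by
        rw [zpow_sub_one]; rfl
      rw [h1, h1', ih, hsymm, h2]

/-- a linear map invariant under e is invariant under zpowers -/
theorem zpow_invariant_map (g : M →ₗ[K] N) (e : M ≃ₗ[K] M)
    (hcomm : ∀ x, g (e x) = g x) : ∀ (j : ℤ) (x : M), g ((e ^ j) x) = g x := by
  have h := zpow_comm_map g e (1 : N ≃ₗ[K] N) (by intro x; rw [hcomm]; rfl)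
  intro j x
  rw [h j x, one_zpow]; rfl

theorem zpow_fixed (e : M ≃ₗ[K] M) (x : M) (hx : e x = x) (j : ℤ) : (e ^ j) x = x := by
  have hs : e.symm x = x := by conv_lhs => rw [← hx]; rw [e.symm_apply_apply]
  induction j using Int.induction_on with
  | zero => rfl
  | succ i ih =>
      have h1 : ((e : M ≃ₗ[K] M) ^ ((i : ℤ) + 1)) x = (e ^ (i : ℤ)) (e x) := by
        rw [zpow_add_one]; rfl
      rw [h1, hx, ih]
  | pred i ih =>
      have h1 : ((e : M ≃ₗ[K] M) ^ (-(i : ℤ) - 1)) x = (e ^ (-(i : ℤ))) (e.symm x) := by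
        rw [zpow_sub_one]; rfl
      rw [h1, hs, ih]

theorem zpow_apply_zpow (e : M ≃ₗ[K] M) (i j : ℤ) (x : M) :
    (e ^ i) ((e ^ j) x) = (e ^ (i + j)) x := by
  rw [zpow_add]; rfl

theorem zpow_symm_apply (e : M ≃ₗ[K] M) (j : ℤ) (x : M) :
    (e ^ j) (e.symm x) = (e ^ (j - 1)) x := by
  have : e.symm x = (e ^ (-1 : ℤ)) x := rfl
  rw [this, zpow_apply_zpow, ← sub_eq_add_neg]

end Generic
section Generic2
variable {K : Type*} [Field K] {M N : Type*} [AddCommGroup M] [Module K M]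
  [AddCommGroup N] [Module K N]

theorem zpow_succ_apply (e : M ≃ₗ[K] M) (j : ℤ) (x : M) :
    (e ^ (j + 1)) x = (e ^ j) (e x) := by rw [zpow_add_one]; rfl


theorem str_apply_zpow {K M : Type*} [Field K] [AddCommGroup M] [Module K M]
    (e : M ≃ₗ[K] M) (j : ℤ) (x : M) : e ((e ^ j) x) = (e ^ (j + 1)) x := by
  have h1 : e ((e ^ j) x) = (e ^ (1 : ℤ)) ((e ^ j) x) := by rw [zpow_one]
  rw [h1, zpow_apply_zpow, add_comm]

theorem zpow_exp_congr {K M : Type*} [Field K] [AddCommGroup M] [Module K M]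
    (e : M ≃ₗ[K] M) {i j : ℤ} (h : i = j) (x : M) : (e ^ i) x = (e ^ j) x := by rw [h]

end Generic2
section RBAux
variable {K H A : Type*} [Field K] [AddCommGroup H] [Module K H] [AddCommGroup A] [Module K A]

theorem rb_oneH_zpow (HB : HomBialgebraStr K H) (j : ℤ) : (HB.str ^ j) HB.one = HB.one :=
  zpow_fixed _ _ HB.str_one j

theorem rb_oneA_zpow (AA : HomAlgebraStr K A) (j : ℤ) : (AA.str ^ j) AA.one = AA.one :=
  zpow_fixed _ _ AA.str_one j

theorem rb_strA_symm_one (AA : HomAlgebraStr K A) : AA.str.symm AA.one = AA.one := by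
  conv_lhs => rw [← AA.str_one]
  rw [AA.str.symm_apply_apply]

theorem rb_counit_zpow (HB : HomBialgebraStr K H) (j : ℤ) (x : H) :
    HB.counit ((HB.str ^ j) x) = HB.counit x :=
  zpow_invariant_map HB.counit HB.str HB.counit_str j x

theorem rb_counit_symm (HB : HomBialgebraStr K H) (x : H) :
    HB.counit (HB.str.symm x) = HB.counit x := by
  conv_rhs => rw [← HB.str.apply_symm_apply x, HB.counit_str]

theorem rb_comul_zpow (HB : HomBialgebraStr K H) (j : ℤ) (h : H) :
    HB.comul ((HB.str ^ j) h)
      = TensorProduct.map (HB.str ^ j).toLinearMap (HB.str ^ j).toLinearMap (HB.comul h) := by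
  have hc := zpow_comm_map HB.comul HB.str (TensorProduct.congr HB.str HB.str)
    (fun x => by rw [HB.comul_str]; rfl) j h
  rw [hc, TensorProduct.congr_zpow]; rfl

theorem rb_mul_zpow (HB : HomBialgebraStr K H) (j : ℤ) (x y : H) :
    HB.mul ((HB.str ^ j) x) ((HB.str ^ j) y) = (HB.str ^ j) (HB.mul x y) :=
  zpow_comm_map2 HB.mul HB.str HB.str HB.str (fun x y => (HB.str_mul x y).symm) j x y

theorem rb_counit_left_reduce (HB : HomBialgebraStr K H) {M : Type*} [AddCommGroup M] [Module K M]
    (f : H →ₗ[K] M) (h : H) :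
    TensorProduct.lid K M (TensorProduct.map HB.counit f (HB.comul h)) = f (HB.str.symm h) := by
  have key : (TensorProduct.lid K M).toLinearMap ∘ₗ TensorProduct.map HB.counit f
      = f ∘ₗ (TensorProduct.lid K H).toLinearMap ∘ₗ
          TensorProduct.map HB.counit (LinearMap.id : H →ₗ[K] H) :=
    TensorProduct.ext' (fun x y => by simp)
  have hk := LinearMap.congr_fun key (HB.comul h)
  simp only [LinearMap.comp_apply, LinearEquiv.coe_coe] at hk
  rw [hk, HB.counit_comul_left]

theorem rb_counit_right_reduce (HB : HomBialgebraStr K H) {M : Type*} [AddCommGroup M] [Module K M]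
    (f : H →ₗ[K] M) (h : H) :
    TensorProduct.rid K M (TensorProduct.map f HB.counit (HB.comul h)) = f (HB.str.symm h) := by
  have key : (TensorProduct.rid K M).toLinearMap ∘ₗ TensorProduct.map f HB.counit
      = f ∘ₗ (TensorProduct.rid K H).toLinearMap ∘ₗ
          TensorProduct.map (LinearMap.id : H →ₗ[K] H) HB.counit :=
    TensorProduct.ext' (fun x y => by simp)
  have hk := LinearMap.congr_fun key (HB.comul h)
  simp only [LinearMap.comp_apply, LinearEquiv.coe_coe] at hk
  rw [hk, HB.counit_comul_right]

/-- the two-sided counit on `H ⊗ H` -/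
def rb_c2 (HB : HomBialgebraStr K H) : H ⊗[K] H →ₗ[K] K :=
  (TensorProduct.lid K K).toLinearMap ∘ₗ TensorProduct.map HB.counit HB.counit

theorem rb_c2_tmul (HB : HomBialgebraStr K H) (q s : H) :
    rb_c2 HB (q ⊗ₜ[K] s) = HB.counit q * HB.counit s := by
  simp [rb_c2, smul_eq_mul]

theorem rb_double_reduce (HB : HomBialgebraStr K H) {M : Type*} [AddCommGroup M] [Module K M]
    (F : H ⊗[K] H →ₗ[K] M) (h g : H) :
    TensorProduct.rid K M (TensorProduct.map F (rb_c2 HB)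
        (TensorProduct.tensorTensorTensorComm K H H H H (HB.comul h ⊗ₜ[K] HB.comul g)))
      = F (HB.str.symm h ⊗ₜ[K] HB.str.symm g) := by
  have step1 : ∀ p q : H,
      TensorProduct.rid K M (TensorProduct.map F (rb_c2 HB)
          (TensorProduct.tensorTensorTensorComm K H H H H ((p ⊗ₜ[K] q) ⊗ₜ[K] HB.comul g)))
        = HB.counit q • F (p ⊗ₜ[K] HB.str.symm g) := by
    intro p q
    have s1 : (TensorProduct.rid K M).toLinearMap ∘ₗ TensorProduct.map F (rb_c2 HB) ∘ₗ
          (TensorProduct.tensorTensorTensorComm K H H H H).toLinearMap ∘ₗ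
          (TensorProduct.mk K (H ⊗[K] H) (H ⊗[K] H) (p ⊗ₜ[K] q))
        = HB.counit q • ((TensorProduct.rid K M).toLinearMap ∘ₗ
            TensorProduct.map (F ∘ₗ TensorProduct.mk K H H p) HB.counit) :=
      TensorProduct.ext' (fun r s => by
        simp [rb_c2_tmul, TensorProduct.tensorTensorTensorComm_tmul, mul_comm, mul_smul])
    have hk := LinearMap.congr_fun s1 (HB.comul g)
    simp only [LinearMap.comp_apply, LinearEquiv.coe_coe, LinearMap.smul_apply,
      TensorProduct.mk_apply] at hk
    rw [hk]
    have := rb_counit_right_reduce HB (F ∘ₗ TensorProduct.mk K H H p) g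
    simp only [LinearMap.comp_apply, TensorProduct.mk_apply] at this
    rw [this]
  have step2 : (TensorProduct.rid K M).toLinearMap ∘ₗ TensorProduct.map F (rb_c2 HB) ∘ₗ
        (TensorProduct.tensorTensorTensorComm K H H H H).toLinearMap ∘ₗ
        ((TensorProduct.mk K (H ⊗[K] H) (H ⊗[K] H)).flip (HB.comul g))
      = (TensorProduct.rid K M).toLinearMap ∘ₗ
          TensorProduct.map (F ∘ₗ (TensorProduct.mk K H H).flip (HB.str.symm g)) HB.counit :=
    TensorProduct.ext' (fun p q => by
      have := step1 p q
      simp only [LinearMap.comp_apply, LinearMap.flip_apply, LinearEquiv.coe_coe,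
        TensorProduct.mk_apply] at this ⊢
      rw [this]
      simp [TensorProduct.smul_tmul'])
  have hk := LinearMap.congr_fun step2 (HB.comul h)
  simp only [LinearMap.comp_apply, LinearMap.flip_apply, LinearEquiv.coe_coe,
    TensorProduct.mk_apply] at hk
  rw [hk]
  have := rb_counit_right_reduce HB (F ∘ₗ (TensorProduct.mk K H H).flip (HB.str.symm g)) h
  simp only [LinearMap.comp_apply, LinearMap.flip_apply, TensorProduct.mk_apply] at this
  rw [this]

end RBAux
section RBM1
variable {K H A : Type*} [Field K] [AddCommGroup H] [Module K H] [AddCommGroup A] [Module K A]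

theorem rb_M1 (HB : HomBialgebraStr K H) (AA : HomAlgebraStr K A)
    (act : H →ₗ[K] A →ₗ[K] A) (σ : H →ₗ[K] H →ₗ[K] A) (m k : ℤ)
    (hact : IsWeakModuleAlgebra HB AA act) (a : A) (h g : H) :
    cpMulElem HB AA act σ m k a h AA.one g =
      TensorProduct.map
        ((AA.mul a) ∘ₗ AA.str.toLinearMap ∘ₗ TensorProduct.lift σ ∘ₗ
          TensorProduct.map (HB.str ^ k).toLinearMap (HB.str ^ k).toLinearMap)
        (HB.str.toLinearMap ∘ₗ TensorProduct.lift HB.mul)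
        (TensorProduct.tensorTensorTensorComm K H H H H (HB.comul h ⊗ₜ[K] HB.comul g)) := by
  have keyF : ((AA.mul a) ∘ₗ TensorProduct.lift AA.mul ∘ₗ
      TensorProduct.map
        ((act.flip ((AA.str ^ (-2 : ℤ)) AA.one)) ∘ₗ (HB.str ^ m).toLinearMap)
        (TensorProduct.lift σ ∘ₗ
          TensorProduct.map (HB.str ^ (k+1)).toLinearMap (HB.str ^ k).toLinearMap) ∘ₗ
      (TensorProduct.assoc K H H H).toLinearMap) ∘ₗ
        TensorProduct.map HB.comul (LinearMap.id : H →ₗ[K] H)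
      = (AA.mul a) ∘ₗ AA.str.toLinearMap ∘ₗ TensorProduct.lift σ ∘ₗ
          TensorProduct.map (HB.str ^ k).toLinearMap (HB.str ^ k).toLinearMap := by
    apply TensorProduct.ext'
    intro p r
    have claim : ((AA.mul a) ∘ₗ TensorProduct.lift AA.mul ∘ₗ
        TensorProduct.map
          ((act.flip ((AA.str ^ (-2 : ℤ)) AA.one)) ∘ₗ (HB.str ^ m).toLinearMap)
          (TensorProduct.lift σ ∘ₗ
            TensorProduct.map (HB.str ^ (k+1)).toLinearMap (HB.str ^ k).toLinearMap) ∘ₗ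
        (TensorProduct.assoc K H H H).toLinearMap) ∘ₗ
          ((TensorProduct.mk K (H ⊗[K] H) H).flip r)
        = ((AA.mul a) ∘ₗ AA.str.toLinearMap ∘ₗ (σ.flip ((HB.str ^ k) r)) ∘ₗ
            (HB.str ^ (k+1)).toLinearMap) ∘ₗ
          (TensorProduct.lid K H).toLinearMap ∘ₗ
          TensorProduct.map HB.counit (LinearMap.id : H →ₗ[K] H) := by
      apply TensorProduct.ext'
      intro x y
      simp only [LinearMap.comp_apply, LinearMap.flip_apply, TensorProduct.mk_apply,
        LinearEquiv.coe_coe, TensorProduct.assoc_tmul, TensorProduct.map_tmul,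
        TensorProduct.lift.tmul, TensorProduct.lid_tmul, LinearMap.id_coe, id_eq,
        rb_oneA_zpow, hact.act_one, rb_counit_zpow, map_smul, LinearMap.smul_apply,
        AA.one_mul]
    have hk := LinearMap.congr_fun claim (HB.comul p)
    simp only [LinearMap.comp_apply, LinearMap.flip_apply, TensorProduct.mk_apply,
      LinearEquiv.coe_coe] at hk
    have hred := rb_counit_left_reduce HB (LinearMap.id : H →ₗ[K] H) p
    simp only [LinearMap.id_coe, id_eq] at hred
    have hz : (HB.str ^ (k+1)) (HB.str.symm p) = (HB.str ^ k) p := by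
      rw [zpow_symm_apply, show k+1-1 = k from by omega]
    simp only [LinearMap.comp_apply, TensorProduct.map_tmul, LinearMap.id_coe, id_eq,
      LinearEquiv.coe_coe, TensorProduct.lift.tmul]
    rw [hk, hred, hz]
  have keymap :
      TensorProduct.map
        ((AA.mul a) ∘ₗ TensorProduct.lift AA.mul ∘ₗ
          TensorProduct.map
            ((act.flip ((AA.str ^ (-2 : ℤ)) AA.one)) ∘ₗ (HB.str ^ m).toLinearMap)
            (TensorProduct.lift σ ∘ₗ
              TensorProduct.map (HB.str ^ (k+1)).toLinearMap (HB.str ^ k).toLinearMap) ∘ₗ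
          (TensorProduct.assoc K H H H).toLinearMap)
        (HB.str.toLinearMap ∘ₗ TensorProduct.lift HB.mul) ∘ₗ
      TensorProduct.map (TensorProduct.map HB.comul (LinearMap.id : H →ₗ[K] H))
        (LinearMap.id : H ⊗[K] H →ₗ[K] H ⊗[K] H)
      = TensorProduct.map
          ((AA.mul a) ∘ₗ AA.str.toLinearMap ∘ₗ TensorProduct.lift σ ∘ₗ
            TensorProduct.map (HB.str ^ k).toLinearMap (HB.str ^ k).toLinearMap)
          (HB.str.toLinearMap ∘ₗ TensorProduct.lift HB.mul) := by
    rw [← TensorProduct.map_comp, keyF, LinearMap.comp_id]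
  have := LinearMap.congr_fun keymap
    (TensorProduct.tensorTensorTensorComm K H H H H (HB.comul h ⊗ₜ[K] HB.comul g))
  simp only [LinearMap.comp_apply] at this
  exact this

end RBM1
section RBS
variable {K H A : Type*} [Field K] [AddCommGroup H] [Module K H] [AddCommGroup A] [Module K A]

theorem rb_extract (HB : HomBialgebraStr K H) {M : Type*} [AddCommGroup M] [Module K M]
    (W : H →ₗ[K] M) (V : H →ₗ[K] H)
    (hV : ∀ x, HB.counit (V x) = HB.counit x) (h : H) (u : M)
    (heq : TensorProduct.map W V (HB.comul h) = u ⊗ₜ[K] HB.str h) :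
    W (HB.str.symm h) = HB.counit h • u := by
  have comp1 : (TensorProduct.rid K M).toLinearMap ∘ₗ
        TensorProduct.map (LinearMap.id : M →ₗ[K] M) HB.counit ∘ₗ TensorProduct.map W V
      = (TensorProduct.rid K M).toLinearMap ∘ₗ TensorProduct.map W HB.counit :=
    TensorProduct.ext' (fun x y => by simp [hV])
  have h2 := LinearMap.congr_fun comp1 (HB.comul h)
  simp only [LinearMap.comp_apply, LinearEquiv.coe_coe] at h2
  rw [heq] at h2
  simp only [TensorProduct.map_tmul, LinearMap.id_coe, id_eq, TensorProduct.rid_tmul,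
    HB.counit_str] at h2
  rw [rb_counit_right_reduce HB W h] at h2
  exact h2.symm

theorem rb_counit_lift_mul (HB : HomBialgebraStr K H) :
    HB.counit ∘ₗ TensorProduct.lift HB.mul = rb_c2 HB :=
  TensorProduct.ext' (fun q s => by
    simp [TensorProduct.lift.tmul, HB.counit_mul, rb_c2_tmul])

theorem rb_base1 (HB : HomBialgebraStr K H) (AA : HomAlgebraStr K A)
    (AC : HomCoalgebraStr K A) (act : H →ₗ[K] A →ₗ[K] A) (coact : A →ₗ[K] H ⊗[K] A)
    (σ : H →ₗ[K] H →ₗ[K] A) (m k : ℤ) (B : HomBialgebraStr K (A ⊗[K] H))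
    (hB : IsRadfordBiproduct HB AA AC act coact σ m k B)
    (hact : IsWeakModuleAlgebra HB AA act) (h : H) :
    TensorProduct.map
        (AA.str.toLinearMap ∘ₗ AA.str.toLinearMap ∘ₗ (σ.flip HB.one) ∘ₗ (HB.str ^ k).toLinearMap)
        (HB.str.toLinearMap ∘ₗ HB.str.toLinearMap) (HB.comul h)
      = AA.one ⊗ₜ[K] HB.str h := by
  have e1 := B.mul_one (AA.one ⊗ₜ[K] h)
  rw [hB.one_def, hB.mul_def, rb_M1 HB AA act σ m k hact AA.one h HB.one, hB.str_def,
    HB.comul_one] at e1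
  have rearr : TensorProduct.map
        ((AA.mul AA.one) ∘ₗ AA.str.toLinearMap ∘ₗ TensorProduct.lift σ ∘ₗ
          TensorProduct.map (HB.str ^ k).toLinearMap (HB.str ^ k).toLinearMap)
        (HB.str.toLinearMap ∘ₗ TensorProduct.lift HB.mul) ∘ₗ
        (TensorProduct.tensorTensorTensorComm K H H H H).toLinearMap ∘ₗ
        ((TensorProduct.mk K (H ⊗[K] H) (H ⊗[K] H)).flip (HB.one ⊗ₜ[K] HB.one))
      = TensorProduct.map
          (AA.str.toLinearMap ∘ₗ AA.str.toLinearMap ∘ₗ (σ.flip HB.one) ∘ₗ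
            (HB.str ^ k).toLinearMap)
          (HB.str.toLinearMap ∘ₗ HB.str.toLinearMap) :=
    TensorProduct.ext' (fun p q => by
      simp [TensorProduct.tensorTensorTensorComm_tmul, rb_oneH_zpow, AA.one_mul, HB.mul_one])
  have hr := LinearMap.congr_fun rearr (HB.comul h)
  simp only [LinearMap.comp_apply, LinearMap.flip_apply, TensorProduct.mk_apply,
    LinearEquiv.coe_coe] at hr
  rw [hr] at e1
  rw [e1]
  simp [TensorProduct.congr_tmul, AA.str_one]

theorem rb_S1 (HB : HomBialgebraStr K H) (AA : HomAlgebraStr K A)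
    (AC : HomCoalgebraStr K A) (act : H →ₗ[K] A →ₗ[K] A) (coact : A →ₗ[K] H ⊗[K] A)
    (σ : H →ₗ[K] H →ₗ[K] A) (m k : ℤ) (B : HomBialgebraStr K (A ⊗[K] H))
    (hB : IsRadfordBiproduct HB AA AC act coact σ m k B)
    (hact : IsWeakModuleAlgebra HB AA act) (x : H) :
    σ x HB.one = HB.counit x • AA.one := by
  have key := rb_extract HB
    (AA.str.toLinearMap ∘ₗ AA.str.toLinearMap ∘ₗ (σ.flip HB.one) ∘ₗ (HB.str ^ k).toLinearMap)
    (HB.str.toLinearMap ∘ₗ HB.str.toLinearMap)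
    (fun y => by simp [HB.counit_str]) ((HB.str ^ (1-k)) x) AA.one
    (rb_base1 HB AA AC act coact σ m k B hB hact ((HB.str ^ (1-k)) x))
  simp only [LinearMap.comp_apply, LinearEquiv.coe_coe, LinearMap.flip_apply] at key
  rw [zpow_symm_apply, zpow_apply_zpow, show (k : ℤ) - 1 + (1 - k) = 0 from by omega,
    zpow_zero, rb_counit_zpow] at key
  have key2 := congrArg (fun z => AA.str.symm (AA.str.symm z)) key
  simpa [LinearEquiv.symm_apply_apply, map_smul, rb_strA_symm_one] using key2

theorem rb_base2 (HB : HomBialgebraStr K H) (AA : HomAlgebraStr K A)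
    (AC : HomCoalgebraStr K A) (act : H →ₗ[K] A →ₗ[K] A) (coact : A →ₗ[K] H ⊗[K] A)
    (σ : H →ₗ[K] H →ₗ[K] A) (m k : ℤ) (B : HomBialgebraStr K (A ⊗[K] H))
    (hB : IsRadfordBiproduct HB AA AC act coact σ m k B)
    (hact : IsWeakModuleAlgebra HB AA act) (g : H) :
    TensorProduct.map
        (AA.str.toLinearMap ∘ₗ AA.str.toLinearMap ∘ₗ (σ HB.one) ∘ₗ (HB.str ^ k).toLinearMap)
        (HB.str.toLinearMap ∘ₗ HB.str.toLinearMap) (HB.comul g)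
      = AA.one ⊗ₜ[K] HB.str g := by
  have e1 := B.one_mul (AA.one ⊗ₜ[K] g)
  rw [hB.one_def, hB.mul_def, rb_M1 HB AA act σ m k hact AA.one HB.one g, hB.str_def,
    HB.comul_one] at e1
  have rearr : TensorProduct.map
        ((AA.mul AA.one) ∘ₗ AA.str.toLinearMap ∘ₗ TensorProduct.lift σ ∘ₗ
          TensorProduct.map (HB.str ^ k).toLinearMap (HB.str ^ k).toLinearMap)
        (HB.str.toLinearMap ∘ₗ TensorProduct.lift HB.mul) ∘ₗ
        (TensorProduct.tensorTensorTensorComm K H H H H).toLinearMap ∘ₗ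
        ((TensorProduct.mk K (H ⊗[K] H) (H ⊗[K] H)) (HB.one ⊗ₜ[K] HB.one))
      = TensorProduct.map
          (AA.str.toLinearMap ∘ₗ AA.str.toLinearMap ∘ₗ (σ HB.one) ∘ₗ
            (HB.str ^ k).toLinearMap)
          (HB.str.toLinearMap ∘ₗ HB.str.toLinearMap) :=
    TensorProduct.ext' (fun r s => by
      simp [TensorProduct.tensorTensorTensorComm_tmul, rb_oneH_zpow, AA.one_mul, HB.one_mul])
  have hr := LinearMap.congr_fun rearr (HB.comul g)
  simp only [LinearMap.comp_apply, TensorProduct.mk_apply, LinearEquiv.coe_coe] at hr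
  rw [hr] at e1
  rw [e1]
  simp [TensorProduct.congr_tmul, AA.str_one]

theorem rb_S2 (HB : HomBialgebraStr K H) (AA : HomAlgebraStr K A)
    (AC : HomCoalgebraStr K A) (act : H →ₗ[K] A →ₗ[K] A) (coact : A →ₗ[K] H ⊗[K] A)
    (σ : H →ₗ[K] H →ₗ[K] A) (m k : ℤ) (B : HomBialgebraStr K (A ⊗[K] H))
    (hB : IsRadfordBiproduct HB AA AC act coact σ m k B)
    (hact : IsWeakModuleAlgebra HB AA act) (x : H) :
    σ HB.one x = HB.counit x • AA.one := by
  have key := rb_extract HB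
    (AA.str.toLinearMap ∘ₗ AA.str.toLinearMap ∘ₗ (σ HB.one) ∘ₗ (HB.str ^ k).toLinearMap)
    (HB.str.toLinearMap ∘ₗ HB.str.toLinearMap)
    (fun y => by simp [HB.counit_str]) ((HB.str ^ (1-k)) x) AA.one
    (rb_base2 HB AA AC act coact σ m k B hB hact ((HB.str ^ (1-k)) x))
  simp only [LinearMap.comp_apply, LinearEquiv.coe_coe] at key
  rw [zpow_symm_apply, zpow_apply_zpow, show (k : ℤ) - 1 + (1 - k) = 0 from by omega,
    zpow_zero, rb_counit_zpow] at key
  have key2 := congrArg (fun z => AA.str.symm (AA.str.symm z)) key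
  simpa [LinearEquiv.symm_apply_apply, map_smul, rb_strA_symm_one] using key2

end RBS
section RBS3
variable {K H A : Type*} [Field K] [AddCommGroup H] [Module K H] [AddCommGroup A] [Module K A]

theorem rb_S3 (HB : HomBialgebraStr K H) (AA : HomAlgebraStr K A)
    (AC : HomCoalgebraStr K A) (act : H →ₗ[K] A →ₗ[K] A) (coact : A →ₗ[K] H ⊗[K] A)
    (σ : H →ₗ[K] H →ₗ[K] A) (m k : ℤ) (B : HomBialgebraStr K (A ⊗[K] H))
    (hB : IsRadfordBiproduct HB AA AC act coact σ m k B)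
    (hact : IsWeakModuleAlgebra HB AA act) (x y : H) :
    σ (HB.str x) (HB.str y) = AA.str (σ x y) := by
  -- gmapL and smapL from rb_M1 with a := AA.one
  set gmapL : H ⊗[K] H →ₗ[K] A :=
    (AA.mul AA.one) ∘ₗ AA.str.toLinearMap ∘ₗ TensorProduct.lift σ ∘ₗ
      TensorProduct.map (HB.str ^ k).toLinearMap (HB.str ^ k).toLinearMap with hgmapL
  set smapL : H ⊗[K] H →ₗ[K] H := HB.str.toLinearMap ∘ₗ TensorProduct.lift HB.mul with hsmapL
  have main : ∀ h g : H,
      AA.str (AA.str (AA.str (σ ((HB.str ^ (k-1)) h) ((HB.str ^ (k-1)) g))))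
        = AA.str (AA.str (σ ((HB.str ^ k) h) ((HB.str ^ k) g))) := by
    intro h g
    have e3 := B.str_mul (AA.one ⊗ₜ[K] h) (AA.one ⊗ₜ[K] g)
    rw [hB.mul_def, rb_M1 HB AA act σ m k hact AA.one h g, hB.str_def] at e3
    -- simplify RHS of e3 : congr-applied simple tensors, then mul_def + M1 again
    have hstr1 : (TensorProduct.congr AA.str HB.str) (AA.one ⊗ₜ[K] h)
        = AA.one ⊗ₜ[K] HB.str h := by simp [TensorProduct.congr_tmul, AA.str_one]
    have hstr2 : (TensorProduct.congr AA.str HB.str) (AA.one ⊗ₜ[K] g)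
        = AA.one ⊗ₜ[K] HB.str g := by simp [TensorProduct.congr_tmul, AA.str_one]
    rw [hstr1, hstr2, hB.mul_def, rb_M1 HB AA act σ m k hact AA.one (HB.str h) (HB.str g),
      HB.comul_str, HB.comul_str] at e3
    -- apply T := rid ∘ (id ⊗ counit) to both sides
    have CL : (TensorProduct.rid K A).toLinearMap ∘ₗ
          TensorProduct.map (LinearMap.id : A →ₗ[K] A) HB.counit ∘ₗ
          (TensorProduct.congr AA.str HB.str).toLinearMap ∘ₗ TensorProduct.map gmapL smapL
        = (TensorProduct.rid K A).toLinearMap ∘ₗ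
            TensorProduct.map (AA.str.toLinearMap ∘ₗ gmapL) (rb_c2 HB) :=
      TensorProduct.ext' (fun u v => by
        have hc : HB.counit (HB.str (smapL v)) = rb_c2 HB v := by
          rw [HB.counit_str, hsmapL]
          simp only [LinearMap.comp_apply, LinearEquiv.coe_coe, HB.counit_str]
          exact LinearMap.congr_fun (rb_counit_lift_mul HB) v
        simp [TensorProduct.congr_tmul, hc])
    have CR : (TensorProduct.rid K A).toLinearMap ∘ₗ
          TensorProduct.map (LinearMap.id : A →ₗ[K] A) HB.counit ∘ₗ
          TensorProduct.map gmapL smapL ∘ₗ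
          TensorProduct.map (TensorProduct.map HB.str.toLinearMap HB.str.toLinearMap)
            (TensorProduct.map HB.str.toLinearMap HB.str.toLinearMap)
        = (TensorProduct.rid K A).toLinearMap ∘ₗ
            TensorProduct.map
              (gmapL ∘ₗ TensorProduct.map HB.str.toLinearMap HB.str.toLinearMap) (rb_c2 HB) :=
      TensorProduct.ext' (fun u v => by
        have hc : HB.counit (smapL (TensorProduct.map HB.str.toLinearMap HB.str.toLinearMap v))
            = rb_c2 HB v := by
          have comp2 : HB.counit ∘ₗ smapL ∘ₗ
                TensorProduct.map HB.str.toLinearMap HB.str.toLinearMap = rb_c2 HB :=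
            TensorProduct.ext' (fun q s => by
              have : HB.mul (HB.str q) (HB.str s) = HB.str (HB.mul q s) := (HB.str_mul q s).symm
              simp [hsmapL, this, HB.counit_str, HB.counit_mul, rb_c2_tmul])
          have := LinearMap.congr_fun comp2 v
          simpa using this
        simp [hc])
    -- move ttt past (map (map str str) (map str str)) on RHS
    have swap : ∀ c d : H ⊗[K] H,
        TensorProduct.tensorTensorTensorComm K H H H H
            ((TensorProduct.map HB.str.toLinearMap HB.str.toLinearMap c) ⊗ₜ[K]
             (TensorProduct.map HB.str.toLinearMap HB.str.toLinearMap d))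
          = TensorProduct.map (TensorProduct.map HB.str.toLinearMap HB.str.toLinearMap)
              (TensorProduct.map HB.str.toLinearMap HB.str.toLinearMap)
              (TensorProduct.tensorTensorTensorComm K H H H H (c ⊗ₜ[K] d)) := by
      intro c d
      have hsw : (TensorProduct.tensorTensorTensorComm K H H H H).toLinearMap ∘ₗ
            TensorProduct.map (TensorProduct.map HB.str.toLinearMap HB.str.toLinearMap)
              (TensorProduct.map HB.str.toLinearMap HB.str.toLinearMap)
          = TensorProduct.map (TensorProduct.map HB.str.toLinearMap HB.str.toLinearMap)
              (TensorProduct.map HB.str.toLinearMap HB.str.toLinearMap) ∘ₗ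
            (TensorProduct.tensorTensorTensorComm K H H H H).toLinearMap := by
        ext p q r s
        simp [TensorProduct.tensorTensorTensorComm_tmul]
      have := LinearMap.congr_fun hsw (c ⊗ₜ[K] d)
      simpa using this
    rw [swap] at e3
    have eL := congrArg (fun z => TensorProduct.rid K A
      (TensorProduct.map (LinearMap.id : A →ₗ[K] A) HB.counit z)) e3
    have hCL := LinearMap.congr_fun CL
      (TensorProduct.tensorTensorTensorComm K H H H H (HB.comul h ⊗ₜ[K] HB.comul g))
    have hCR := LinearMap.congr_fun CR
      (TensorProduct.tensorTensorTensorComm K H H H H (HB.comul h ⊗ₜ[K] HB.comul g))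
    simp only [LinearMap.comp_apply, LinearEquiv.coe_coe] at hCL hCR
    rw [hCL, hCR] at eL
    rw [rb_double_reduce, rb_double_reduce] at eL
    -- compute both sides explicitly
    simp only [LinearMap.comp_apply, TensorProduct.map_tmul, LinearEquiv.coe_coe,
      LinearEquiv.apply_symm_apply, hgmapL, TensorProduct.lift.tmul, AA.one_mul,
      zpow_symm_apply] at eL
    exact eL
  have inst := main ((HB.str ^ (1-k)) x) ((HB.str ^ (1-k)) y)
  rw [zpow_apply_zpow, zpow_apply_zpow, zpow_apply_zpow, zpow_apply_zpow,
    show (k : ℤ) - 1 + (1 - k) = 0 from by omega,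
    show (k : ℤ) + (1 - k) = 1 from by omega, zpow_zero, zpow_one] at inst
  have key2 := congrArg (fun z => AA.str.symm (AA.str.symm z)) inst
  simpa [LinearEquiv.symm_apply_apply] using key2.symm

theorem rb_sigma_zpow (HB : HomBialgebraStr K H) (AA : HomAlgebraStr K A)
    (AC : HomCoalgebraStr K A) (act : H →ₗ[K] A →ₗ[K] A) (coact : A →ₗ[K] H ⊗[K] A)
    (σ : H →ₗ[K] H →ₗ[K] A) (m k : ℤ) (B : HomBialgebraStr K (A ⊗[K] H))
    (hB : IsRadfordBiproduct HB AA AC act coact σ m k B)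
    (hact : IsWeakModuleAlgebra HB AA act) (j : ℤ) (x y : H) :
    σ ((HB.str ^ j) x) ((HB.str ^ j) y) = (AA.str ^ j) (σ x y) :=
  zpow_comm_map2 σ HB.str HB.str AA.str
    (fun x y => rb_S3 HB AA AC act coact σ m k B hB hact x y) j x y

end RBS3
section RBE
variable {K H A : Type*} [Field K] [AddCommGroup H] [Module K H] [AddCommGroup A] [Module K A]

theorem rb_E (HB : HomBialgebraStr K H) (AA : HomAlgebraStr K A)
    (AC : HomCoalgebraStr K A) (act : H →ₗ[K] A →ₗ[K] A) (coact : A →ₗ[K] H ⊗[K] A)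
    (σ : H →ₗ[K] H →ₗ[K] A) (m k : ℤ) (B : HomBialgebraStr K (A ⊗[K] H))
    (hB : IsRadfordBiproduct HB AA AC act coact σ m k B)
    (hact : IsWeakModuleAlgebra HB AA act)
    (φr : (A ⊗[K] H) →ₗ[K] H →ₗ[K] (A ⊗[K] H))
    (hφr : ∀ (a : A) (h : H) (l : H), φr (a ⊗ₜ[K] h) l = phirElem HB AA σ m k a h l)
    (x : A ⊗[K] H) (l : H) :
    φr x l = B.mul x (AA.one ⊗ₜ[K] (HB.str ^ (-m)) l) := by
  induction x using TensorProduct.induction_on with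
  | zero => simp
  | add u v hu hv => simp [map_add, LinearMap.add_apply, hu, hv]
  | tmul a h =>
      rw [hφr, hB.mul_def, rb_M1 HB AA act σ m k hact a h ((HB.str ^ (-m)) l),
        rb_comul_zpow]
      have key : TensorProduct.map
            ((AA.mul a) ∘ₗ TensorProduct.lift σ ∘ₗ
              TensorProduct.map (HB.str ^ (k+1)).toLinearMap (HB.str ^ (k+1-m)).toLinearMap)
            (TensorProduct.lift HB.mul ∘ₗ
              TensorProduct.map HB.str.toLinearMap (HB.str ^ (1-m)).toLinearMap) ∘ₗ
            (TensorProduct.tensorTensorTensorComm K H H H H).toLinearMap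
          = TensorProduct.map
              ((AA.mul a) ∘ₗ AA.str.toLinearMap ∘ₗ TensorProduct.lift σ ∘ₗ
                TensorProduct.map (HB.str ^ k).toLinearMap (HB.str ^ k).toLinearMap)
              (HB.str.toLinearMap ∘ₗ TensorProduct.lift HB.mul) ∘ₗ
            (TensorProduct.tensorTensorTensorComm K H H H H).toLinearMap ∘ₗ
            TensorProduct.map (LinearMap.id : H ⊗[K] H →ₗ[K] H ⊗[K] H)
              (TensorProduct.map (HB.str ^ (-m)).toLinearMap (HB.str ^ (-m)).toLinearMap) := by
        ext p q r s
        simp only [TensorProduct.AlgebraTensorModule.curry_apply, TensorProduct.curry_apply,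
          LinearMap.coe_restrictScalars, LinearMap.comp_apply, LinearMap.compr₂_apply,
          TensorProduct.mk_apply, TensorProduct.map_tmul, LinearEquiv.coe_coe,
          TensorProduct.tensorTensorTensorComm_tmul, TensorProduct.lift.tmul,
          LinearMap.id_coe, id_eq]
        have hs3 : σ ((HB.str ^ (k+1)) p) ((HB.str ^ (k+1-m)) r)
            = AA.str (σ ((HB.str ^ k) p) ((HB.str ^ (k-m)) r)) := by
          rw [zpow_exp_congr HB.str (show (k : ℤ) + 1 - m = k - m + 1 from by omega) r,
            ← str_apply_zpow HB.str k p, ← str_apply_zpow HB.str (k-m) r,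
            rb_S3 HB AA AC act coact σ m k B hB hact]
        rw [HB.str_mul, str_apply_zpow,
          zpow_exp_congr HB.str (show (-m : ℤ) + 1 = 1 - m from by omega),
          zpow_apply_zpow HB.str k (-m) r,
          zpow_exp_congr HB.str (show (k : ℤ) + -m = k - m from by omega), hs3]
      have hk := LinearMap.congr_fun key (HB.comul h ⊗ₜ[K] HB.comul l)
      simp only [LinearMap.comp_apply, TensorProduct.map_tmul, LinearMap.id_coe, id_eq,
        LinearEquiv.coe_coe] at hk
      exact hk

theorem rb_F1 (HB : HomBialgebraStr K H) (AA : HomAlgebraStr K A)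
    (AC : HomCoalgebraStr K A) (act : H →ₗ[K] A →ₗ[K] A) (coact : A →ₗ[K] H ⊗[K] A)
    (σ : H →ₗ[K] H →ₗ[K] A) (m k : ℤ) (B : HomBialgebraStr K (A ⊗[K] H))
    (hB : IsRadfordBiproduct HB AA AC act coact σ m k B)
    (hact : IsWeakModuleAlgebra HB AA act)
    (φr : (A ⊗[K] H) →ₗ[K] H →ₗ[K] (A ⊗[K] H))
    (hφr : ∀ (a : A) (h : H) (l : H), φr (a ⊗ₜ[K] h) l = phirElem HB AA σ m k a h l)
    (c : A) (t : H) :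
    φr (c ⊗ₜ[K] HB.one) t = AA.str c ⊗ₜ[K] (HB.str ^ (1-m)) t := by
  rw [hφr]
  unfold phirElem
  rw [HB.comul_one]
  have key : TensorProduct.map
        ((AA.mul c) ∘ₗ TensorProduct.lift σ ∘ₗ
          TensorProduct.map (HB.str ^ (k+1)).toLinearMap (HB.str ^ (k+1-m)).toLinearMap)
        (TensorProduct.lift HB.mul ∘ₗ
          TensorProduct.map HB.str.toLinearMap (HB.str ^ (1-m)).toLinearMap) ∘ₗ
        (TensorProduct.tensorTensorTensorComm K H H H H).toLinearMap ∘ₗ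
        ((TensorProduct.mk K (H ⊗[K] H) (H ⊗[K] H)) (HB.one ⊗ₜ[K] HB.one))
      = (TensorProduct.mk K A H (AA.str c)) ∘ₗ (TensorProduct.lid K H).toLinearMap ∘ₗ
          TensorProduct.map HB.counit (HB.str ^ (2-m)).toLinearMap := by
    apply TensorProduct.ext'
    intro r s
    simp only [LinearMap.comp_apply, TensorProduct.mk_apply, LinearEquiv.coe_coe,
      TensorProduct.tensorTensorTensorComm_tmul, TensorProduct.map_tmul,
      TensorProduct.lift.tmul, TensorProduct.lid_tmul]
    rw [rb_oneH_zpow, rb_S2 HB AA AC act coact σ m k B hB hact, rb_counit_zpow,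
      HB.str_one, HB.one_mul, str_apply_zpow,
      zpow_exp_congr HB.str (show (1 : ℤ) - m + 1 = 2 - m from by omega)]
    simp [map_smul, AA.mul_one, TensorProduct.smul_tmul, TensorProduct.tmul_smul]
  have hk := LinearMap.congr_fun key (HB.comul t)
  simp only [LinearMap.comp_apply, TensorProduct.mk_apply, LinearEquiv.coe_coe] at hk
  rw [hk, rb_counit_left_reduce HB (HB.str ^ (2-m)).toLinearMap t]
  simp only [LinearEquiv.coe_coe]
  rw [zpow_symm_apply, zpow_exp_congr HB.str (show (2 : ℤ) - m - 1 = 1 - m from by omega)]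

end RBE
/-- Lemma 4.8: `(A ♯_σ^× H, β ⊗ α, φ^r)` is a right `(H, α, σ̄)`-Hom module. -/
theorem biproduct_right_sigma_module
    {K H A : Type*} [Field K] [AddCommGroup H] [Module K H] [AddCommGroup A] [Module K A]
    (HB : HomBialgebraStr K H) (AA : HomAlgebraStr K A) (AC : HomCoalgebraStr K A)
    (act : H →ₗ[K] A →ₗ[K] A) (hact : IsWeakModuleAlgebra HB AA act)
    (coact : A →ₗ[K] H ⊗[K] A) (hcc : IsComoduleCoalgebra HB AC coact)
    (σ σinv : H →ₗ[K] H →ₗ[K] A)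
    (hconv : IsConvInvPair HB AA σ σinv) (m k : ℤ)
    (B : HomBialgebraStr K (A ⊗[K] H))
    (hB : IsRadfordBiproduct HB AA AC act coact σ m k B)
    (φr : (A ⊗[K] H) →ₗ[K] H →ₗ[K] (A ⊗[K] H))
    (hφr : ∀ (a : A) (h : H) (l : H), φr (a ⊗ₜ[K] h) l = phirElem HB AA σ m k a h l)
    (σbar : H →ₗ[K] H →ₗ[K] A ⊗[K] H)
    (hσbar : ∀ h l : H,
      σbar h l = σ ((HB.str ^ (k+1-m)) h) ((HB.str ^ (k+1-m)) l) ⊗ₜ[K] HB.one) :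
    IsRightSigmaHomModule HB B.mul
      (TensorProduct.map AA.str.toLinearMap HB.str.toLinearMap) σbar φr := by
  have hE := rb_E HB AA AC act coact σ m k B hB hact φr hφr
  constructor
  · intro x l g
    rw [hE (φr x l) (HB.str g), hE x l]
    have hv : AA.one ⊗ₜ[K] (HB.str ^ (-m)) (HB.str g)
        = B.str (AA.one ⊗ₜ[K] (HB.str ^ (-m)) g) := by
      rw [hB.str_def]
      have h1 : HB.str g = (HB.str ^ (1 : ℤ)) g := by rw [zpow_one]
      have h2 : (TensorProduct.congr AA.str HB.str) (AA.one ⊗ₜ[K] (HB.str ^ (-m)) g)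
          = AA.one ⊗ₜ[K] (HB.str ^ (-m+1)) g := by
        simp only [TensorProduct.congr_tmul, AA.str_one, str_apply_zpow]
      rw [h2, h1, zpow_apply_zpow]
    rw [hv, ← B.hom_assoc]
    rw [hB.str_def]
    have hcx : (TensorProduct.congr AA.str HB.str) x
        = TensorProduct.map AA.str.toLinearMap HB.str.toLinearMap x := rfl
    rw [hcx]
    congr 1
    rw [hB.mul_def, rb_M1 HB AA act σ m k hact AA.one ((HB.str ^ (-m)) l) ((HB.str ^ (-m)) g),
      rb_comul_zpow, rb_comul_zpow]
    have inner : TensorProduct.lift φr ∘ₗ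
          TensorProduct.map (TensorProduct.lift σbar) (TensorProduct.lift HB.mul)
        = TensorProduct.map
            (AA.str.toLinearMap ∘ₗ TensorProduct.lift σ ∘ₗ
              TensorProduct.map (HB.str ^ (k+1-m)).toLinearMap (HB.str ^ (k+1-m)).toLinearMap)
            ((HB.str ^ (1-m)).toLinearMap ∘ₗ TensorProduct.lift HB.mul) := by
      ext p q r s
      simp only [TensorProduct.AlgebraTensorModule.curry_apply, TensorProduct.curry_apply,
        LinearMap.coe_restrictScalars, LinearMap.comp_apply, TensorProduct.map_tmul,
        TensorProduct.lift.tmul, LinearEquiv.coe_coe]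
      rw [hσbar p q, rb_F1 HB AA AC act coact σ m k B hB hact φr hφr]
    have hin := LinearMap.congr_fun inner
      (TensorProduct.tensorTensorTensorComm K H H H H (HB.comul l ⊗ₜ[K] HB.comul g))
    simp only [LinearMap.comp_apply] at hin
    rw [hin]
    have final : TensorProduct.map
          ((AA.mul AA.one) ∘ₗ AA.str.toLinearMap ∘ₗ TensorProduct.lift σ ∘ₗ
            TensorProduct.map (HB.str ^ k).toLinearMap (HB.str ^ k).toLinearMap)
          (HB.str.toLinearMap ∘ₗ TensorProduct.lift HB.mul) ∘ₗ
          (TensorProduct.tensorTensorTensorComm K H H H H).toLinearMap ∘ₗ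
          TensorProduct.map
            (TensorProduct.map (HB.str ^ (-m)).toLinearMap (HB.str ^ (-m)).toLinearMap)
            (TensorProduct.map (HB.str ^ (-m)).toLinearMap (HB.str ^ (-m)).toLinearMap)
        = TensorProduct.map
            (AA.str.toLinearMap ∘ₗ TensorProduct.lift σ ∘ₗ
              TensorProduct.map (HB.str ^ (k+1-m)).toLinearMap (HB.str ^ (k+1-m)).toLinearMap)
            ((HB.str ^ (1-m)).toLinearMap ∘ₗ TensorProduct.lift HB.mul) ∘ₗ
          (TensorProduct.tensorTensorTensorComm K H H H H).toLinearMap := by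
      ext p q r s
      simp only [TensorProduct.AlgebraTensorModule.curry_apply, TensorProduct.curry_apply,
        LinearMap.coe_restrictScalars, LinearMap.comp_apply, TensorProduct.map_tmul,
        TensorProduct.tensorTensorTensorComm_tmul, TensorProduct.lift.tmul,
        LinearEquiv.coe_coe]
      have hs3 : σ ((HB.str ^ (k+1-m)) p) ((HB.str ^ (k+1-m)) r)
          = AA.str (σ ((HB.str ^ (k-m)) p) ((HB.str ^ (k-m)) r)) := by
        rw [zpow_exp_congr HB.str (show (k : ℤ) + 1 - m = k - m + 1 from by omega) p,
          zpow_exp_congr HB.str (show (k : ℤ) + 1 - m = k - m + 1 from by omega) r,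
          ← str_apply_zpow HB.str (k-m) p, ← str_apply_zpow HB.str (k-m) r,
          rb_S3 HB AA AC act coact σ m k B hB hact]
      rw [AA.one_mul, zpow_apply_zpow, zpow_apply_zpow, rb_mul_zpow, str_apply_zpow,
        zpow_exp_congr HB.str (show (-m : ℤ) + 1 = 1 - m from by omega),
        zpow_exp_congr HB.str (show (k : ℤ) + -m = k - m from by omega) p,
        zpow_exp_congr HB.str (show (k : ℤ) + -m = k - m from by omega) r, hs3]
    have hf := LinearMap.congr_fun final (HB.comul l ⊗ₜ[K] HB.comul g)
    simp only [LinearMap.comp_apply, TensorProduct.map_tmul] at hf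
    exact hf
  · intro x
    rw [hE x HB.one, rb_oneH_zpow, ← hB.one_def, B.mul_one, hB.str_def]
    rfl
end
end
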